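/- arXiv:2305.09413 — 9 statements merged into one kernel-verified Lean document; each statement's English description precedes it below -/
import Mathlib

section
/- Let H be a complex Hilbert space, a : H → H a bounded linear operator and c > 0 such that Re⟪x, a x⟫ ≥ c‖x‖² for all x ∈ H. Then a is bijective and the bounded inverse a⁻¹ satisfies Re⟪y, a⁻¹ y⟫ ≥ c‖a‖⁻²‖y‖² for all y ∈ H. -/
/-- Let `H` be a complex Hilbert space, `a : H → H` a bounded linear
operator and `c > 0` such that `Re⟪x, a x⟫ ≥ c‖x‖²` for all `x ∈ H`. Then `a` is
bijective and the bounded inverse `a⁻¹` satisfies `Re⟪y, a⁻¹ y⟫ ≥ c‖a‖⁻²‖y‖²` for all `y`. -/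
theorem stmt1 {H : Type*} [NormedAddCommGroup H] [InnerProductSpace ℂ H] [CompleteSpace H]
    (a : H →L[ℂ] H) (c : ℝ) (hc : 0 < c)
    (hcoer : ∀ x : H, c * ‖x‖ ^ 2 ≤ (inner ℂ x (a x) : ℂ).re) :
    Function.Bijective a ∧
      ∃ b : H →L[ℂ] H, (∀ x, b (a x) = x) ∧ (∀ x, a (b x) = x) ∧
        ∀ y : H, c * (‖a‖ ^ 2)⁻¹ * ‖y‖ ^ 2 ≤ (inner ℂ y (b y) : ℂ).re := by
  -- the lower bound ‖a x‖ ≥ c‖x‖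
  have hlow : ∀ x : H, c * ‖x‖ ≤ ‖a x‖ := by
    intro x
    rcases eq_or_ne x 0 with rfl | hx
    · simp
    · have h1 : c * ‖x‖ ^ 2 ≤ ‖x‖ * ‖a x‖ := by
        calc c * ‖x‖ ^ 2 ≤ (inner ℂ x (a x) : ℂ).re := hcoer x
          _ ≤ ‖(inner ℂ x (a x) : ℂ)‖ := Complex.re_le_norm _
          _ ≤ ‖x‖ * ‖a x‖ := norm_inner_le_norm _ _
      have hxpos : (0:ℝ) < ‖x‖ := norm_pos_iff.mpr hx
      nlinarith
  have hanti : AntilipschitzWith ⟨c⁻¹, by positivity⟩ a := by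
    refine AntilipschitzWith.of_le_mul_dist fun x y => ?_
    rw [dist_eq_norm, dist_eq_norm, ← map_sub]
    have := hlow (x - y)
    have : ‖x - y‖ ≤ c⁻¹ * ‖a (x - y)‖ := by
      rw [le_inv_mul_iff₀ hc]; exact this
    exact this
  have hinj : LinearMap.ker (a : H →ₗ[ℂ] H) = ⊥ :=
    LinearMap.ker_eq_bot_of_injective (f := (a : H →ₗ[ℂ] H)) hanti.injective
  -- closed range
  have hclosed : IsClosed (Set.range a) := hanti.isClosed_range a.uniformContinuous
  have hclosed' : IsClosed ((LinearMap.range (a : H →ₗ[ℂ] H) : Submodule ℂ H) : Set H) := by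
    simpa [LinearMap.coe_range] using hclosed
  haveI : CompleteSpace (LinearMap.range (a : H →ₗ[ℂ] H) : Submodule ℂ H) := hclosed'.completeSpace_coe
  -- orthogonal complement of range is trivial
  have horth : (LinearMap.range (a : H →ₗ[ℂ] H))ᗮ = ⊥ := by
    rw [Submodule.eq_bot_iff]
    intro y hy
    have h0 : (inner ℂ (a y) y : ℂ) = 0 := hy (a y) (LinearMap.mem_range_self _ y)
    have h0' : (inner ℂ y (a y) : ℂ) = 0 := by
      rw [← inner_conj_symm, h0]; simp
    have := hcoer y
    rw [h0'] at this
    simp at this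
    rcases eq_or_lt_of_le (norm_nonneg y) with h | h
    · exact norm_eq_zero.mp h.symm
    · exfalso; nlinarith [mul_pos hc (pow_pos h 2)]
  have hsurj : LinearMap.range (a : H →ₗ[ℂ] H) = ⊤ := Submodule.orthogonal_eq_bot_iff.mp horth
  have hbij : Function.Bijective a :=
    ⟨hanti.injective, LinearMap.range_eq_top.mp hsurj⟩
  refine ⟨hbij, ?_⟩
  set e := ContinuousLinearEquiv.ofBijective a hinj hsurj with he
  refine ⟨(e.symm : H →L[ℂ] H), fun x => e.symm_apply_apply x, fun x => e.apply_symm_apply x, ?_⟩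
  intro y
  set x := e.symm y with hx
  have hax : a x = y := e.apply_symm_apply y
  have h1 : (inner ℂ y ((e.symm : H →L[ℂ] H) y) : ℂ).re = (inner ℂ (a x) x : ℂ).re := by
    rw [hax]; rfl
  have h2 : (inner ℂ (a x) x : ℂ).re = (inner ℂ x (a x) : ℂ).re := by
    rw [show (inner ℂ (a x) x : ℂ) = starRingEnd ℂ (inner ℂ x (a x)) from (inner_conj_symm _ _).symm,
      Complex.conj_re]
  have h3 : c * ‖x‖ ^ 2 ≤ (inner ℂ y ((e.symm : H →L[ℂ] H) y) : ℂ).re := by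
    rw [h1, h2]; exact hcoer x
  have hy : ‖y‖ ≤ ‖a‖ * ‖x‖ := by rw [← hax]; exact a.le_opNorm x
  rcases eq_or_lt_of_le (norm_nonneg a) with hA | hA
  · have : ‖y‖ = 0 := le_antisymm (by nlinarith [norm_nonneg x]) (norm_nonneg y)
    rw [this]
    nlinarith [norm_nonneg x]
  · have h5 : (‖a‖ ^ 2)⁻¹ * ‖y‖ ^ 2 ≤ ‖x‖ ^ 2 := by
      rw [inv_mul_le_iff₀ (by positivity : (0:ℝ) < ‖a‖ ^ 2)]
      nlinarith [norm_nonneg y, norm_nonneg x]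
    have key : c * (‖a‖ ^ 2)⁻¹ * ‖y‖ ^ 2 ≤ c * ‖x‖ ^ 2 := by
      rw [mul_assoc]
      exact mul_le_mul_of_nonneg_left h5 hc.le
    linarith
end

section
/- Let H be a complex Hilbert space and C : dom(C) ⊆ H → H a densely defined closed linear operator. Define BD(C) := {u ∈ dom(C) : C u ∈ dom(C), C(C u) = -u}. Then the map C_BD : u ↦ C u maps BD(C) bijectively onto BD(C), its inverse is u ↦ -C u, it preserves the graph inner product (for all u, v ∈ BD(C): ⟪C u, C v⟫ + ⟪C(C u), C(C v)⟫ = ⟪u, v⟫ + ⟪C u, C v⟫), and it is skew-symmetric with respect to the graph inner product: for all u, v ∈ BD(C), ⟪C u, v⟫ + ⟪C(C u), C v⟫ = -(⟪u, C v⟫ + ⟪C u, C(C v)⟫). -/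
/-- The abstract boundary data space `BD(C) = {u ∈ dom(C) : C u ∈ dom(C), C (C u) = -u}`,
as a subset of `dom(C)`, for a partially defined operator `C : H →ₗ. H`. -/
def boundaryDataCurl {H : Type*}
    [NormedAddCommGroup H] [InnerProductSpace ℂ H]
    (C : H →ₗ.[ℂ] H) : Set C.domain :=
  {u | ∃ h : C u ∈ C.domain, C ⟨C u, h⟩ = -(u : H)}

/-- For `u ∈ BD(C)`, `C (C u) = -u`, for any membership proof. -/
lemma bd_apply {H : Type*}
    [NormedAddCommGroup H] [InnerProductSpace ℂ H]
    (C : H →ₗ.[ℂ] H) {u : C.domain} (hu : u ∈ boundaryDataCurl C)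
    (h : C u ∈ C.domain) : C ⟨C u, h⟩ = -(u : H) := by
  obtain ⟨h₀, h₁⟩ := hu
  exact h₁

/-- For a densely defined closed operator `C` on `H`, the map `u ↦ C u`
maps `BD(C)` bijectively onto `BD(C)` with inverse `u ↦ -C u`, preserves the
graph inner product, and is skew-symmetric with respect to the graph inner product. -/
theorem stmt5 {H : Type*}
    [NormedAddCommGroup H] [InnerProductSpace ℂ H] [CompleteSpace H]
    (C : H →ₗ.[ℂ] H)
    (hCdense : Dense (C.domain : Set H)) (hCclosed : C.IsClosed) :
    -- `C_BD` maps `BD(C)` into `BD(C)`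
    (∀ u : C.domain, u ∈ boundaryDataCurl C → ∀ h : C u ∈ C.domain,
        (⟨C u, h⟩ : C.domain) ∈ boundaryDataCurl C) ∧
    -- `u ↦ -C u` maps `BD(C)` into `BD(C)`
    (∀ u : C.domain, u ∈ boundaryDataCurl C → ∀ h : -(C u) ∈ C.domain,
        (⟨-(C u), h⟩ : C.domain) ∈ boundaryDataCurl C) ∧
    -- `u ↦ -C u` is a left inverse of `C_BD` on `BD(C)`
    (∀ u : C.domain, u ∈ boundaryDataCurl C → ∀ h : C u ∈ C.domain,
        -(C ⟨C u, h⟩) = (u : H)) ∧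
    -- `u ↦ -C u` is a right inverse of `C_BD` on `BD(C)`
    (∀ u : C.domain, u ∈ boundaryDataCurl C → ∀ h : -(C u) ∈ C.domain,
        C ⟨-(C u), h⟩ = (u : H)) ∧
    -- `C_BD` preserves the graph inner product
    (∀ u v : C.domain, u ∈ boundaryDataCurl C → v ∈ boundaryDataCurl C →
      ∀ (hu : C u ∈ C.domain) (hv : C v ∈ C.domain),
        (inner ℂ (C u) (C v) : ℂ) + inner ℂ (C ⟨C u, hu⟩) (C ⟨C v, hv⟩) =
          (inner ℂ (u : H) (v : H) : ℂ) + inner ℂ (C u) (C v)) ∧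
    -- `C_BD` is skew-symmetric with respect to the graph inner product
    (∀ u v : C.domain, u ∈ boundaryDataCurl C → v ∈ boundaryDataCurl C →
      ∀ (hu : C u ∈ C.domain) (hv : C v ∈ C.domain),
        (inner ℂ (C u) (v : H) : ℂ) + inner ℂ (C ⟨C u, hu⟩) (C v) =
          -((inner ℂ (u : H) (C v) : ℂ) + inner ℂ (C u) (C ⟨C v, hv⟩))) := by
  have key : ∀ u : C.domain, u ∈ boundaryDataCurl C → ∀ h : C u ∈ C.domain,
      C ⟨C u, h⟩ = -(u : H) := fun u hu h => bd_apply C hu h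
  have hCneg : ∀ u : C.domain, C (-u) = -(C u) := fun u => C.map_neg u
  refine ⟨?_, ?_, ?_, ?_, ?_, ?_⟩
  · intro u hu h
    have e : C ⟨C u, h⟩ = -(u : H) := key u hu h
    have h' : C ⟨C u, h⟩ ∈ C.domain := e ▸ (neg_mem u.2)
    refine ⟨h', ?_⟩
    have e2 : (⟨C ⟨C u, h⟩, h'⟩ : C.domain) = -u := Subtype.ext e
    rw [e2, hCneg]
  · intro u hu h
    obtain ⟨h₀, -⟩ := id hu
    have e0 : (⟨-(C u), h⟩ : C.domain) = -⟨C u, h₀⟩ := rfl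
    have e : C ⟨-(C u), h⟩ = (u : H) := by
      rw [e0, hCneg, key u hu h₀, neg_neg]
    refine ⟨e ▸ u.2, ?_⟩
    have e2 : (⟨C ⟨-(C u), h⟩, e ▸ u.2⟩ : C.domain) = u := Subtype.ext e
    rw [e2]
    exact (neg_neg _).symm
  · intro u hu h
    rw [key u hu h, neg_neg]
  · intro u hu h
    obtain ⟨h₀, -⟩ := id hu
    have e0 : (⟨-(C u), h⟩ : C.domain) = -⟨C u, h₀⟩ := rfl
    rw [e0, hCneg, key u hu h₀, neg_neg]
  · intro u v hu hv hcu hcv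
    rw [key u hu hcu, key v hv hcv, inner_neg_neg, add_comm]
  · intro u v hu hv hcu hcv
    rw [key u hu hcu, key v hv hcv, inner_neg_left, inner_neg_right, neg_add, neg_neg,
      add_comm]
end

section
/- Let H, K be complex Hilbert spaces, A : dom(A) ⊆ H → K and B : dom(B) ⊆ K → H densely defined closed linear operators, and A₀ ⊆ A, B₀ ⊆ B densely defined restrictions such that ⟪B U, u₀⟫_H + ⟪U, A u₀⟫_K = 0 for all U ∈ dom(B), u₀ ∈ dom(A₀), and ⟪B U₀, u⟫_H + ⟪U₀, A u⟫_K = 0 for all u ∈ dom(A), U₀ ∈ dom(B₀) (both hold when A₀* = -B and B₀* = -A). Suppose u ∈ dom(A) decomposes as u = u₀ + u₁ with u₀ ∈ dom(A₀) and u₁ ∈ dom(A), and U ∈ dom(B) decomposes as U = U₀ + U₁ with U₀ ∈ dom(B₀) and U₁ ∈ dom(B). Then ⟪B U, u⟫_H + ⟪U, A u⟫_K = ⟪B U₁, u₁⟫_H + ⟪U₁, A u₁⟫_K. -/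
/-- Abstract integration-by-parts formula: if `A₀ ⊆ A` and `B₀ ⊆ B` are
densely defined restrictions of densely defined closed operators `A : dom(A) ⊆ H → K`,
`B : dom(B) ⊆ K → H` such that `⟪B U, u₀⟫ + ⟪U, A u₀⟫ = 0` for `U ∈ dom(B)`, `u₀ ∈ dom(A₀)`
and `⟪B U₀, u⟫ + ⟪U₀, A u⟫ = 0` for `u ∈ dom(A)`, `U₀ ∈ dom(B₀)`, then for decompositions
`u = u₀ + u₁`, `U = U₀ + U₁` one has `⟪B U, u⟫ + ⟪U, A u⟫ = ⟪B U₁, u₁⟫ + ⟪U₁, A u₁⟫`. -/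
theorem stmt6 {H K : Type*}
    [NormedAddCommGroup H] [InnerProductSpace ℂ H] [CompleteSpace H]
    [NormedAddCommGroup K] [InnerProductSpace ℂ K] [CompleteSpace K]
    (A A₀ : H →ₗ.[ℂ] K) (B B₀ : K →ₗ.[ℂ] H)
    (hAdense : Dense (A.domain : Set H)) (hAclosed : A.IsClosed)
    (hBdense : Dense (B.domain : Set K)) (hBclosed : B.IsClosed)
    (hA₀dense : Dense (A₀.domain : Set H)) (hA₀A : A₀ ≤ A)
    (hB₀dense : Dense (B₀.domain : Set K)) (hB₀B : B₀ ≤ B)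
    (h1 : ∀ (U : B.domain) (u₀ : A₀.domain),
      (inner ℂ (B U) (u₀ : H) : ℂ) + inner ℂ (U : K) (A₀ u₀) = 0)
    (h2 : ∀ (u : A.domain) (U₀ : B₀.domain),
      (inner ℂ (B₀ U₀) (u : H) : ℂ) + inner ℂ (U₀ : K) (A u) = 0)
    (u u₁ : A.domain) (u₀ : A₀.domain) (hu : (u : H) = (u₀ : H) + (u₁ : H))
    (U U₁ : B.domain) (U₀ : B₀.domain) (hU : (U : K) = (U₀ : K) + (U₁ : K)) :
    (inner ℂ (B U) (u : H) : ℂ) + inner ℂ (U : K) (A u) =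
      (inner ℂ (B U₁) (u₁ : H) : ℂ) + inner ℂ (U₁ : K) (A u₁) := by
  set u₀A : A.domain := ⟨(u₀ : H), hA₀A.1 u₀.2⟩ with hu₀A
  set U₀B : B.domain := ⟨(U₀ : K), hB₀B.1 U₀.2⟩ with hU₀B
  have hueq : u = u₀A + u₁ := Subtype.ext (by simpa [hu₀A] using hu)
  have hUeq : U = U₀B + U₁ := Subtype.ext (by simpa [hU₀B] using hU)
  have hAu : A u = A₀ u₀ + A u₁ := by
    rw [hueq, A.map_add, hA₀A.2 (x := u₀) (y := u₀A) rfl]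
  have hBU : B U = B₀ U₀ + B U₁ := by
    rw [hUeq, B.map_add, hB₀B.2 (x := U₀) (y := U₀B) rfl]
  have e1 := h1 U u₀
  have e2 := h2 u₁ U₀
  rw [hBU, hU] at e1
  simp only [inner_add_left, inner_add_right] at e1
  rw [hAu, hBU, hu, hU]
  simp only [inner_add_left, inner_add_right]
  linear_combination e1 + e2
end

section
/- Let H, K be complex Hilbert spaces, A : dom(A) ⊆ H → K and B : dom(B) ⊆ K → H densely defined closed linear operators, and A₀ ⊆ A, B₀ ⊆ B densely defined restrictions with A₀* = -B and B₀* = -A. Set BD(A) := {u ∈ dom(A) : A u ∈ dom(B), B(A u) = u} and BD(B) := {q ∈ dom(B) : B q ∈ dom(A), A(B q) = q}. Let q ∈ dom(B) be decomposed as q = q₀ + q₁ with q₀ ∈ dom(B₀) and q₁ ∈ BD(B), and let τ ∈ BD(A). Then the following are equivalent: (i) for every u ∈ dom(A) and every decomposition u = u₀ + u₁ with u₀ ∈ dom(A₀) and u₁ ∈ BD(A), one has ⟪q, A u⟫_K + ⟪τ, u₁⟫_H + ⟪A τ, A u₁⟫_K = -⟪B q, u⟫_H; (ii) τ = -B q₁.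 -/
/-- The abstract boundary data space `BD(A) = {u ∈ dom(A) : A u ∈ dom(B), B (A u) = u}`,
as a subset of `dom(A)`. -/
def boundaryData {H K : Type*}
    [NormedAddCommGroup H] [InnerProductSpace ℂ H]
    [NormedAddCommGroup K] [InnerProductSpace ℂ K]
    (A : H →ₗ.[ℂ] K) (B : K →ₗ.[ℂ] H) : Set A.domain :=
  {u | ∃ h : A u ∈ B.domain, B ⟨A u, h⟩ = (u : H)}

/-- Characterization of the domain of the adjoint of the column operator
`(A; ι*_{BD(A)})`: with `A₀* = -B` and `B₀* = -A`, for `q = q₀ + q₁ ∈ dom(B)`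
(`q₀ ∈ dom(B₀)`, `q₁ ∈ BD(B)`) and `τ ∈ BD(A)`, the adjoint relation (i) holds for all
decomposable `u ∈ dom(A)` iff `τ = -B q₁`. -/
theorem stmt8 {H K : Type*}
    [NormedAddCommGroup H] [InnerProductSpace ℂ H] [CompleteSpace H]
    [NormedAddCommGroup K] [InnerProductSpace ℂ K] [CompleteSpace K]
    (A A₀ : H →ₗ.[ℂ] K) (B B₀ : K →ₗ.[ℂ] H)
    (hAdense : Dense (A.domain : Set H)) (hAclosed : A.IsClosed)
    (hBdense : Dense (B.domain : Set K)) (hBclosed : B.IsClosed)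
    (hA₀dense : Dense (A₀.domain : Set H)) (hA₀A : A₀ ≤ A)
    (hB₀dense : Dense (B₀.domain : Set K)) (hB₀B : B₀ ≤ B)
    (hadj₁ : A₀.adjoint = -B) (hadj₂ : B₀.adjoint = -A)
    (q q₁ : B.domain) (q₀ : B₀.domain)
    (hq : (q : K) = (q₀ : K) + (q₁ : K)) (hq₁ : q₁ ∈ boundaryData B A)
    (τ : A.domain) (hτ : τ ∈ boundaryData A B) :
    (∀ (u u₁ : A.domain) (u₀ : A₀.domain), u₁ ∈ boundaryData A B →
        (u : H) = (u₀ : H) + (u₁ : H) →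
        (inner ℂ (q : K) (A u) : ℂ) + inner ℂ (τ : H) (u₁ : H) + inner ℂ (A τ) (A u₁) =
          -(inner ℂ (B q) (u : H) : ℂ)) ↔
      (τ : H) = -(B q₁) := by
  classical
  have h1 : (-B).IsFormalAdjoint A₀ := hadj₁ ▸ LinearPMap.adjoint_isFormalAdjoint hA₀dense
  have h2 : (-A).IsFormalAdjoint B₀ := hadj₂ ▸ LinearPMap.adjoint_isFormalAdjoint hB₀dense
  obtain ⟨hmτ, hBAτ⟩ := hτ
  obtain ⟨hm1, hAB1⟩ := hq₁
  have hAr : A ⟨(B q₁ : H), hm1⟩ = (q₁ : K) := hAB1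
  have hBq₀' : B ⟨(q₀ : K), hB₀B.1 q₀.2⟩ = B₀ q₀ := (hB₀B.2 rfl).symm
  have hqsum : q = ⟨(q₀ : K), hB₀B.1 q₀.2⟩ + q₁ := Subtype.ext hq
  have hBq : B q = B ⟨(q₀ : K), hB₀B.1 q₀.2⟩ + B q₁ := by rw [hqsum, LinearPMap.map_add]
  -- fact1 : ⟪q', A u₀'⟫ = -⟪B q', u₀⟫ for u₀ ∈ dom A₀
  have fact1 : ∀ (q' : B.domain) (u₀ : A₀.domain),
      (inner ℂ (q' : K) (A ⟨(u₀ : H), hA₀A.1 u₀.2⟩) : ℂ) = -(inner ℂ (B q') (u₀ : H) : ℂ) := by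
    intro q' u₀
    have h := h1 ⟨(q' : K), q'.2⟩ u₀
    rw [LinearPMap.neg_apply] at h
    have hA₀ : A₀ u₀ = A ⟨(u₀ : H), hA₀A.1 u₀.2⟩ := hA₀A.2 rfl
    rw [hA₀] at h
    have e1 : B (⟨(q' : K), q'.2⟩ : B.domain) = B q' := rfl
    have e2 : ((⟨(q' : K), q'.2⟩ : (-B).domain) : K) = (q' : K) := rfl
    rw [e1, e2, inner_neg_left] at h
    rw [← h]
  -- fact2 : ⟪q₀, A u'⟫ = -⟪B q₀', u'⟫ for any u' ∈ dom A
  have fact2 : ∀ (u' : A.domain),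
      (inner ℂ ((q₀ : K)) (A u') : ℂ)
        = -(inner ℂ (B ⟨(q₀ : K), hB₀B.1 q₀.2⟩) (u' : H) : ℂ) := by
    intro u'
    have h := h2 ⟨(u' : H), u'.2⟩ q₀
    rw [LinearPMap.neg_apply] at h
    have e1 : A (⟨(u' : H), u'.2⟩ : A.domain) = A u' := rfl
    have e2 : ((⟨(u' : H), u'.2⟩ : (-A).domain) : H) = (u' : H) := rfl
    rw [e1, e2, inner_neg_left] at h
    have h' := congrArg (starRingEnd ℂ) h
    simp only [map_neg, inner_conj_symm] at h'
    rw [hBq₀']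
    linear_combination -h'
  constructor
  · -- forward
    intro hyp
    set w : A.domain := τ + ⟨(B q₁ : H), hm1⟩ with hw
    have hAw : A w = A τ + (q₁ : K) := by rw [hw, LinearPMap.map_add, hAr]
    have hAwmem : A w ∈ B.domain := by
      rw [hAw]; exact Submodule.add_mem _ hmτ q₁.2
    have hwBD : w ∈ boundaryData A B := by
      refine ⟨hAwmem, ?_⟩
      have he : (⟨A w, hAwmem⟩ : B.domain) = ⟨A τ, hmτ⟩ + q₁ := by
        apply Subtype.ext; simp [hAw]
      rw [he, LinearPMap.map_add, hBAτ]
      simp [hw]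
    have E1 := hyp w w 0 hwBD (by simp)
    have e1 : (inner ℂ (q : K) (A w) : ℂ)
        = -(inner ℂ (B ⟨(q₀ : K), hB₀B.1 q₀.2⟩) (w : H) : ℂ)
          + inner ℂ (A ⟨(B q₁ : H), hm1⟩) (A w) := by
      rw [hq, inner_add_left, fact2 w, hAr]
    have e2 : (inner ℂ (B q) (w : H) : ℂ)
        = inner ℂ (B ⟨(q₀ : K), hB₀B.1 q₀.2⟩) (w : H) + inner ℂ (B q₁) (w : H) := by
      rw [hBq, inner_add_left]
    rw [e1, e2] at E1
    have E2 : (inner ℂ (w : H) (w : H) : ℂ) + inner ℂ (A w) (A w) = 0 := by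
      have hwH : (w : H) = (τ : H) + (B q₁ : H) := rfl
      have i1 : (inner ℂ (w : H) (w : H) : ℂ)
          = inner ℂ (τ : H) (w : H) + inner ℂ (B q₁ : H) (w : H) := by
        rw [hwH, inner_add_left]
      have i2 : (inner ℂ (A w) (A w) : ℂ)
          = inner ℂ (A τ) (A w) + inner ℂ (A ⟨(B q₁ : H), hm1⟩) (A w) := by
        rw [hAw, inner_add_left, hAr]
      rw [i1, i2]
      linear_combination E1
    have hw0 : (w : H) = 0 := by
      have h3 : RCLike.re (inner ℂ (w : H) (w : H) : ℂ) + RCLike.re (inner ℂ (A w) (A w) : ℂ)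
          = 0 := by
        have h := congrArg (RCLike.re (K := ℂ)) E2
        simpa using h
      rw [inner_self_eq_norm_sq (𝕜 := ℂ) ((w : H)), inner_self_eq_norm_sq (𝕜 := ℂ) (A w)] at h3
      have h5 : ‖(w : H)‖ = 0 := by
        nlinarith [sq_nonneg ‖(w : H)‖, sq_nonneg ‖A w‖]
      simpa using h5
    have hsum : (τ : H) + (B q₁ : H) = 0 := hw0
    exact eq_neg_of_add_eq_zero_left hsum
  · -- reverse
    intro hτval u u₁ u₀ hu₁BD hu
    have hτr : τ = -(⟨(B q₁ : H), hm1⟩ : A.domain) := by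
      apply Subtype.ext
      simpa using hτval
    have hAτ : A τ = -(q₁ : K) := by rw [hτr, LinearPMap.map_neg, hAr]
    have husum : u = ⟨(u₀ : H), hA₀A.1 u₀.2⟩ + u₁ := Subtype.ext hu
    have hAu : A u = A ⟨(u₀ : H), hA₀A.1 u₀.2⟩ + A u₁ := by rw [husum, LinearPMap.map_add]
    have eq1 : (inner ℂ (q : K) (A u) : ℂ)
        = -(inner ℂ (B q) (u₀ : H) : ℂ)
          + (-(inner ℂ (B ⟨(q₀ : K), hB₀B.1 q₀.2⟩) (u₁ : H) : ℂ) + inner ℂ ((q₁ : K)) (A u₁)) := by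
      rw [hAu, inner_add_right, fact1 q u₀]
      congr 1
      rw [hq, inner_add_left, fact2 u₁]
    have eτ : (inner ℂ (τ : H) (u₁ : H) : ℂ) = -(inner ℂ (B q₁ : H) (u₁ : H) : ℂ) := by
      rw [hτval, inner_neg_left]
    have eAτ : (inner ℂ (A τ) (A u₁) : ℂ) = -(inner ℂ ((q₁ : K)) (A u₁) : ℂ) := by
      rw [hAτ, inner_neg_left]
    have eBqu : (inner ℂ (B q) (u : H) : ℂ)
        = inner ℂ (B q) (u₀ : H) + (inner ℂ (B ⟨(q₀ : K), hB₀B.1 q₀.2⟩) (u₁ : H)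
            + inner ℂ (B q₁ : H) (u₁ : H)) := by
      rw [hu, inner_add_right]
      congr 1
      rw [hBq, inner_add_left]
    rw [eq1, eτ, eAτ, eBqu]
    ring
end

section
/- Let H₁, H₂, H₃ be complex Hilbert spaces, β : H₁ → H₂, Q : H₂ → H₃, α : H₃ → H₃ bounded linear operators, and C : H₂ → H₂ a bounded skew-adjoint operator (C* = -C). Let ν > 0 and z ∈ ℂ with Re z ≥ ν, and define the bounded operator T(z) on H₁ ⊕ H₂ ⊕ H₃ by T(z)(x, y, w) := (x - β* y - β* Q* w, β x + y - C Q* w, Q β x - Q C y + w + z⁻¹·(α w)). Then for all (x, y, w) ∈ H₁ ⊕ H₂ ⊕ H₃: Re⟪(x, y, w), T(z)(x, y, w)⟫ = ‖x‖² + ‖y‖² + Re⟪w, w + z⁻¹·(α w)⟫ ≥ (1 - ‖α‖/ν)·(‖x‖² + ‖y‖² + ‖w‖²). -/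
/-- For the block impedance operator
`T(z)(x, y, w) = (x - β* y - β* Q* w, β x + y - C Q* w, Q β x - Q C y + w + z⁻¹ • α w)`
on `H₁ ⊕ H₂ ⊕ H₃` (direct sum inner product), with `C` skew-adjoint, `ν > 0` and
`Re z ≥ ν`, one has
`Re⟪(x,y,w), T(z)(x,y,w)⟫ = ‖x‖² + ‖y‖² + Re⟪w, w + z⁻¹ α w⟫ ≥ (1 - ‖α‖/ν)(‖x‖² + ‖y‖² + ‖w‖²)`. -/
theorem stmt10 {H₁ H₂ H₃ : Type*}
    [NormedAddCommGroup H₁] [InnerProductSpace ℂ H₁] [CompleteSpace H₁]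
    [NormedAddCommGroup H₂] [InnerProductSpace ℂ H₂] [CompleteSpace H₂]
    [NormedAddCommGroup H₃] [InnerProductSpace ℂ H₃] [CompleteSpace H₃]
    (β : H₁ →L[ℂ] H₂) (Q : H₂ →L[ℂ] H₃) (α : H₃ →L[ℂ] H₃) (C : H₂ →L[ℂ] H₂)
    (hC : ContinuousLinearMap.adjoint C = -C)
    (ν : ℝ) (hν : 0 < ν) (z : ℂ) (hz : ν ≤ z.re) :
    ∀ (x : H₁) (y : H₂) (w : H₃),
      ((inner ℂ x (x - (ContinuousLinearMap.adjoint β) y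
            - (ContinuousLinearMap.adjoint β) ((ContinuousLinearMap.adjoint Q) w)) : ℂ)
        + inner ℂ y (β x + y - C ((ContinuousLinearMap.adjoint Q) w))
        + inner ℂ w (Q (β x) - Q (C y) + w + z⁻¹ • α w)).re
        = ‖x‖ ^ 2 + ‖y‖ ^ 2 + (inner ℂ w (w + z⁻¹ • α w) : ℂ).re ∧
      (1 - ‖α‖ / ν) * (‖x‖ ^ 2 + ‖y‖ ^ 2 + ‖w‖ ^ 2) ≤
        ((inner ℂ x (x - (ContinuousLinearMap.adjoint β) y
            - (ContinuousLinearMap.adjoint β) ((ContinuousLinearMap.adjoint Q) w)) : ℂ)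
        + inner ℂ y (β x + y - C ((ContinuousLinearMap.adjoint Q) w))
        + inner ℂ w (Q (β x) - Q (C y) + w + z⁻¹ • α w)).re := by
  intro x y w
  have e1 : (inner ℂ x ((ContinuousLinearMap.adjoint β) y) : ℂ)
      = starRingEnd ℂ (inner ℂ y (β x)) := by
    rw [ContinuousLinearMap.adjoint_inner_right, ← inner_conj_symm]
  have e2 : (inner ℂ x ((ContinuousLinearMap.adjoint β)
      ((ContinuousLinearMap.adjoint Q) w)) : ℂ) = starRingEnd ℂ (inner ℂ w (Q (β x))) := by
    rw [ContinuousLinearMap.adjoint_inner_right, ContinuousLinearMap.adjoint_inner_right,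
      ← inner_conj_symm]
  have e3 : (inner ℂ y (C ((ContinuousLinearMap.adjoint Q) w)) : ℂ)
      = - starRingEnd ℂ (inner ℂ w (Q (C y))) := by
    rw [← ContinuousLinearMap.adjoint_inner_left, hC, ContinuousLinearMap.neg_apply,
      inner_neg_left, ContinuousLinearMap.adjoint_inner_right, ← inner_conj_symm]
  have key : ((inner ℂ x (x - (ContinuousLinearMap.adjoint β) y
            - (ContinuousLinearMap.adjoint β) ((ContinuousLinearMap.adjoint Q) w)) : ℂ)
        + inner ℂ y (β x + y - C ((ContinuousLinearMap.adjoint Q) w))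
        + inner ℂ w (Q (β x) - Q (C y) + w + z⁻¹ • α w)).re
        = ‖x‖ ^ 2 + ‖y‖ ^ 2 + (inner ℂ w (w + z⁻¹ • α w) : ℂ).re := by
    have hx : (inner ℂ x x : ℂ).re = ‖x‖ ^ 2 := by
      rw [inner_self_eq_norm_sq_to_K]; norm_cast
    have hy : (inner ℂ y y : ℂ).re = ‖y‖ ^ 2 := by
      rw [inner_self_eq_norm_sq_to_K]; norm_cast
    simp only [inner_sub_right, inner_add_right, e1, e2, e3]
    simp only [Complex.add_re, Complex.sub_re, Complex.neg_re, Complex.conj_re]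
    rw [hx, hy]
    ring
  refine ⟨key, ?_⟩
  rw [key]
  -- bound the remaining term
  have hzabs : (ν : ℝ) ≤ ‖z‖ := le_trans hz (Complex.re_le_norm z)
  have hzinv : ‖z⁻¹‖ ≤ ν⁻¹ := by
    rw [norm_inv]
    exact inv_anti₀ hν hzabs
  have hw2 : (inner ℂ w (w + z⁻¹ • α w) : ℂ).re
      = ‖w‖ ^ 2 + (inner ℂ w (z⁻¹ • α w) : ℂ).re := by
    have hw1 : (inner ℂ w w : ℂ).re = ‖w‖ ^ 2 := by
      rw [inner_self_eq_norm_sq_to_K]; norm_cast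
    rw [inner_add_right, Complex.add_re, hw1]
  have hbound : |(inner ℂ w (z⁻¹ • α w) : ℂ).re| ≤ (‖α‖ / ν) * ‖w‖ ^ 2 := by
    have h1 : |(inner ℂ w (z⁻¹ • α w) : ℂ).re| ≤ ‖(inner ℂ w (z⁻¹ • α w) : ℂ)‖ :=
      Complex.abs_re_le_norm _
    have h2 : ‖(inner ℂ w (z⁻¹ • α w) : ℂ)‖ ≤ ‖w‖ * ‖z⁻¹ • α w‖ := norm_inner_le_norm _ _
    have h3 : ‖z⁻¹ • α w‖ = ‖z⁻¹‖ * ‖α w‖ := by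
      rw [norm_smul]
    have h4 : ‖α w‖ ≤ ‖α‖ * ‖w‖ := α.le_opNorm w
    have h5 : ‖w‖ * (‖z⁻¹‖ * ‖α w‖) ≤ ‖w‖ * (ν⁻¹ * (‖α‖ * ‖w‖)) := by
      have := mul_le_mul hzinv h4 (norm_nonneg _) (by positivity)
      exact mul_le_mul_of_nonneg_left this (norm_nonneg _)
    calc |(inner ℂ w (z⁻¹ • α w) : ℂ).re| ≤ ‖w‖ * ‖z⁻¹ • α w‖ := le_trans h1 h2
      _ = ‖w‖ * (‖z⁻¹‖ * ‖α w‖) := by rw [h3]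
      _ ≤ ‖w‖ * (ν⁻¹ * (‖α‖ * ‖w‖)) := h5
      _ = (‖α‖ / ν) * ‖w‖ ^ 2 := by field_simp
  rw [hw2]
  have hα : 0 ≤ ‖α‖ / ν := by positivity
  have habs := abs_le.mp hbound
  nlinarith [sq_nonneg ‖x‖, sq_nonneg ‖y‖, sq_nonneg ‖w‖, norm_nonneg x, norm_nonneg y]
end

section
/- Let H₁, H₂, H₃ be complex Hilbert spaces, β : H₁ → H₂, Q : H₂ → H₃, α : H₃ → H₃ bounded linear operators, and C : H₂ → H₂ a bounded skew-adjoint operator (C* = -C). Let ν > ‖α‖ and z ∈ ℂ with Re z ≥ ν, and define T(z) on H₁ ⊕ H₂ ⊕ H₃ by T(z)(x, y, w) := (x - β* y - β* Q* w, β x + y - C Q* w, Q β x - Q C y + w + z⁻¹·(α w)). Then T(z) is bijective with bounded inverse, ‖T(z)⁻¹‖ ≤ (1 - ‖α‖/ν)⁻¹, and Re⟪v, T(z)⁻¹ v⟫ ≥ (1 - ‖α‖/ν)·‖T(z)‖⁻²·‖v‖² for all v ∈ H₁ ⊕ H₂ ⊕ H₃. -/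
set_option maxHeartbeats 1000000
set_option synthInstance.maxHeartbeats 200000

open ContinuousLinearMap


/-- Let `T(z)` be the block impedance operator
`[[1, -β*, -β*Q*], [β, 1, -C Q*], [Qβ, -QC, 1 + α z⁻¹]]` on the Hilbert direct sum
`H₁ ⊕₂ H₂ ⊕₂ H₃`, with `C` skew-adjoint, `ν > ‖α‖` and `Re z ≥ ν`.  Then `T(z)` is
bijective with bounded inverse, `‖T(z)⁻¹‖ ≤ (1 - ‖α‖/ν)⁻¹`, and
`Re⟪v, T(z)⁻¹ v⟫ ≥ (1 - ‖α‖/ν)‖T(z)‖⁻²‖v‖²` for all `v`. -/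
theorem stmt11 {H₁ H₂ H₃ : Type*}
    [NormedAddCommGroup H₁] [InnerProductSpace ℂ H₁] [CompleteSpace H₁]
    [NormedAddCommGroup H₂] [InnerProductSpace ℂ H₂] [CompleteSpace H₂]
    [NormedAddCommGroup H₃] [InnerProductSpace ℂ H₃] [CompleteSpace H₃]
    (β : H₁ →L[ℂ] H₂) (Q : H₂ →L[ℂ] H₃) (α : H₃ →L[ℂ] H₃) (C : H₂ →L[ℂ] H₂)
    (hC : ContinuousLinearMap.adjoint C = -C)
    (ν : ℝ) (hν : ‖α‖ < ν) (z : ℂ) (hz : ν ≤ z.re)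
    (T : WithLp 2 (H₁ × WithLp 2 (H₂ × H₃)) →L[ℂ] WithLp 2 (H₁ × WithLp 2 (H₂ × H₃)))
    (hT : ∀ (x : H₁) (y : H₂) (w : H₃),
      T ((WithLp.equiv 2 (H₁ × WithLp 2 (H₂ × H₃))).symm
          (x, (WithLp.equiv 2 (H₂ × H₃)).symm (y, w))) =
        (WithLp.equiv 2 (H₁ × WithLp 2 (H₂ × H₃))).symm
          (x - (ContinuousLinearMap.adjoint β) y
              - (ContinuousLinearMap.adjoint β) ((ContinuousLinearMap.adjoint Q) w),
            (WithLp.equiv 2 (H₂ × H₃)).symm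
              (β x + y - C ((ContinuousLinearMap.adjoint Q) w),
                Q (β x) - Q (C y) + w + z⁻¹ • α w))) :
    Function.Bijective T ∧
      ∃ S : WithLp 2 (H₁ × WithLp 2 (H₂ × H₃)) →L[ℂ] WithLp 2 (H₁ × WithLp 2 (H₂ × H₃)),
        (∀ v, S (T v) = v) ∧ (∀ v, T (S v) = v) ∧
        ‖S‖ ≤ (1 - ‖α‖ / ν)⁻¹ ∧
        ∀ v, (1 - ‖α‖ / ν) * (‖T‖ ^ 2)⁻¹ * ‖v‖ ^ 2 ≤ (inner ℂ v (S v) : ℂ).re := by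
  have hν0 : 0 < ν := lt_of_le_of_lt (norm_nonneg α) hν
  set c : ℝ := 1 - ‖α‖ / ν with hcdef
  have hc0 : 0 < c := by
    have : ‖α‖ / ν < 1 := (div_lt_one hν0).2 hν
    simp only [hcdef]; linarith
  -- coercivity
  have key : ∀ v, c * ‖v‖ ^ 2 ≤ (inner ℂ v (T v) : ℂ).re := by
    have hzn : ‖z⁻¹‖ ≤ ν⁻¹ := by
      rw [norm_inv]
      refine inv_anti₀ hν0 ?_
      calc ν ≤ z.re := hz
        _ ≤ |z.re| := le_abs_self _
        _ ≤ ‖z‖ := Complex.abs_re_le_norm z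
    intro v
    show (1 - ‖α‖ / ν) * ‖v‖ ^ 2 ≤ (inner ℂ v (T v) : ℂ).re
    obtain ⟨x, y, w, rfl⟩ : ∃ x y w, v = (WithLp.equiv 2 (H₁ × WithLp 2 (H₂ × H₃))).symm
        (x, (WithLp.equiv 2 (H₂ × H₃)).symm (y, w)) :=
      ⟨((WithLp.equiv 2 _) v).1, ((WithLp.equiv 2 _) ((WithLp.equiv 2 _) v).2).1,
        ((WithLp.equiv 2 _) ((WithLp.equiv 2 _) v).2).2, rfl⟩
    rw [hT]
    simp only [WithLp.prod_inner_apply, WithLp.equiv_symm_apply, WithLp.ofLp_toLp,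
      inner_sub_right, inner_add_right, inner_smul_right, adjoint_inner_right]
    have hnorm : ‖(WithLp.equiv 2 (H₁ × WithLp 2 (H₂ × H₃))).symm
        (x, (WithLp.equiv 2 (H₂ × H₃)).symm (y, w))‖ ^ 2 = ‖x‖^2 + ‖y‖^2 + ‖w‖^2 := by
      rw [WithLp.prod_norm_sq_eq_of_L2, WithLp.prod_norm_sq_eq_of_L2]
      simp [add_assoc]
    simp only [WithLp.equiv_symm_apply] at hnorm; rw [hnorm]
    have h1 : (inner ℂ y (β x) : ℂ).re = (inner ℂ (β x) y : ℂ).re := by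
      rw [← inner_conj_symm]; exact Complex.conj_re _
    have h2 : (inner ℂ w (Q (β x)) : ℂ).re = (inner ℂ (Q (β x)) w : ℂ).re := by
      rw [← inner_conj_symm]; exact Complex.conj_re _
    have h3 : (inner ℂ w (Q (C y)) : ℂ).re
        = -(inner ℂ y (C ((ContinuousLinearMap.adjoint Q) w)) : ℂ).re := by
      have e : (inner ℂ y ((ContinuousLinearMap.adjoint C) ((ContinuousLinearMap.adjoint Q) w)) : ℂ)
          = inner ℂ (Q (C y)) w := by rw [adjoint_inner_right, adjoint_inner_right]
      rw [hC] at e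
      simp only [neg_apply, inner_neg_right] at e
      rw [← inner_conj_symm, ← e]
      simp only [map_neg, Complex.neg_re, neg_inj]
      rw [← inner_conj_symm]; exact Complex.conj_re _
    have hxx : (inner ℂ x x : ℂ).re = ‖x‖^2 := by
      simpa using inner_self_eq_norm_sq (𝕜 := ℂ) x
    have hyy : (inner ℂ y y : ℂ).re = ‖y‖^2 := by
      simpa using inner_self_eq_norm_sq (𝕜 := ℂ) y
    have hww : (inner ℂ w w : ℂ).re = ‖w‖^2 := by
      simpa using inner_self_eq_norm_sq (𝕜 := ℂ) w
    have hzb : -(‖α‖/ν * ‖w‖^2) ≤ (z⁻¹ * inner ℂ w (α w)).re := by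
      have ha : |(z⁻¹ * inner ℂ w (α w) : ℂ).re| ≤ ‖z⁻¹‖ * ‖(inner ℂ w (α w) : ℂ)‖ := by
        rw [← norm_mul]
        exact Complex.abs_re_le_norm _
      have hb : ‖(inner ℂ w (α w) : ℂ)‖ ≤ ‖α‖ * ‖w‖^2 := by
        calc ‖(inner ℂ w (α w) : ℂ)‖ ≤ ‖w‖ * ‖α w‖ := norm_inner_le_norm _ _
          _ ≤ ‖w‖ * (‖α‖ * ‖w‖) := by
              exact mul_le_mul_of_nonneg_left (α.le_opNorm w) (norm_nonneg w)
          _ = ‖α‖ * ‖w‖^2 := by ring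
      have hcc : ‖z⁻¹‖ * ‖(inner ℂ w (α w) : ℂ)‖ ≤ ν⁻¹ * (‖α‖ * ‖w‖^2) := by
        apply mul_le_mul hzn hb (norm_nonneg _) (by positivity)
      have := neg_abs_le (z⁻¹ * inner ℂ w (α w) : ℂ).re
      rw [div_eq_inv_mul, mul_assoc]
      linarith
    simp only [Complex.add_re, Complex.sub_re, h1, h2, h3, hxx, hyy, hww]
    have hw2 : ‖α‖/ν * ‖w‖^2 ≤ ‖α‖/ν * (‖x‖^2 + ‖y‖^2 + ‖w‖^2) := by
      apply mul_le_mul_of_nonneg_left _ (by positivity)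
      nlinarith [sq_nonneg ‖x‖, sq_nonneg ‖y‖]
    nlinarith [hzb, hw2]
  -- lower bound on ‖T v‖
  have hlow : ∀ v, c * ‖v‖ ≤ ‖T v‖ := by
    intro v
    rcases eq_or_lt_of_le (norm_nonneg v) with h0 | h0
    · rw [← h0]; simp [norm_nonneg]
    · have h1 := key v
      have h2 : (inner ℂ v (T v) : ℂ).re ≤ ‖v‖ * ‖T v‖ := by
        calc (inner ℂ v (T v) : ℂ).re ≤ |(inner ℂ v (T v) : ℂ).re| := le_abs_self _
          _ ≤ ‖(inner ℂ v (T v) : ℂ)‖ := Complex.abs_re_le_norm _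
          _ ≤ ‖v‖ * ‖T v‖ := norm_inner_le_norm _ _
      have : c * ‖v‖ * ‖v‖ ≤ ‖T v‖ * ‖v‖ := by nlinarith
      exact le_of_mul_le_mul_right this h0
  have hinj : Function.Injective T := by
    intro u v h
    have h1 := hlow (u - v)
    rw [map_sub, h, sub_self, norm_zero] at h1
    have : ‖u - v‖ ≤ 0 := by nlinarith
    rw [← sub_eq_zero]
    exact norm_le_zero_iff.mp this
  -- closed range
  have hanti : AntilipschitzWith (⟨c⁻¹, (inv_nonneg.2 hc0.le)⟩ : NNReal) T := by
    apply ContinuousLinearMap.antilipschitz_of_bound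
    intro v
    have h1 := hlow v
    have hci : c * c⁻¹ = 1 := mul_inv_cancel₀ hc0.ne'
    show ‖v‖ ≤ c⁻¹ * ‖T v‖
    have h2 : c⁻¹ * (c * ‖v‖) = ‖v‖ := by field_simp
    linarith [mul_le_mul_of_nonneg_left h1 (inv_nonneg.2 hc0.le)]
  have hclosed : IsClosed ((LinearMap.range (T : WithLp 2 (H₁ × WithLp 2 (H₂ × H₃)) →ₗ[ℂ] WithLp 2 (H₁ × WithLp 2 (H₂ × H₃)))) : Set (WithLp 2 (H₁ × WithLp 2 (H₂ × H₃)))) := by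
    rw [LinearMap.coe_range]
    exact hanti.isClosed_range T.uniformContinuous
  haveI : CompleteSpace (LinearMap.range (T : WithLp 2 (H₁ × WithLp 2 (H₂ × H₃)) →ₗ[ℂ] WithLp 2 (H₁ × WithLp 2 (H₂ × H₃)))) := hclosed.completeSpace_coe
  have hbot : (LinearMap.range (T : WithLp 2 (H₁ × WithLp 2 (H₂ × H₃)) →ₗ[ℂ] WithLp 2 (H₁ × WithLp 2 (H₂ × H₃))))ᗮ = ⊥ := by
    rw [Submodule.eq_bot_iff]
    intro u hu
    have h0 : (inner ℂ (T u) u : ℂ) = 0 :=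
      (Submodule.mem_orthogonal _ u).mp hu (T u) (LinearMap.mem_range_self _ u)
    have h1 := key u
    have h2 : (inner ℂ u (T u) : ℂ).re = 0 := by
      rw [← inner_conj_symm, h0]; simp
    have : ‖u‖ ^ 2 ≤ 0 := by nlinarith
    have : ‖u‖ = 0 := by nlinarith [norm_nonneg u, sq_nonneg ‖u‖]
    exact norm_eq_zero.mp this
  have hrange : LinearMap.range (T : WithLp 2 (H₁ × WithLp 2 (H₂ × H₃)) →ₗ[ℂ] WithLp 2 (H₁ × WithLp 2 (H₂ × H₃))) = ⊤ := Submodule.orthogonal_eq_bot_iff.mp hbot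
  have hsurj : Function.Surjective T := LinearMap.range_eq_top.mp hrange
  refine ⟨⟨hinj, hsurj⟩, ?_⟩
  let e := ContinuousLinearEquiv.ofBijective T (LinearMap.ker_eq_bot.mpr hinj) hrange
  have heT : ∀ v, e v = T v := fun v => rfl
  refine ⟨(e.symm : _ →L[ℂ] _), ?_, ?_, ?_, ?_⟩
  · intro v
    show e.symm (T v) = v
    rw [← heT]; exact e.symm_apply_apply v
  · intro v
    show T (e.symm v) = v
    rw [← heT]; exact e.apply_symm_apply v
  · apply ContinuousLinearMap.opNorm_le_bound _ (inv_nonneg.2 hc0.le)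
    intro v
    have h1 := hlow (e.symm v)
    have h2 : T (e.symm v) = v := by rw [← heT]; exact e.apply_symm_apply v
    rw [h2] at h1
    show ‖e.symm v‖ ≤ c⁻¹ * ‖v‖
    have h3 : c⁻¹ * (c * ‖e.symm v‖) = ‖e.symm v‖ := by field_simp
    linarith [mul_le_mul_of_nonneg_left h1 (inv_nonneg.2 hc0.le)]
  · intro v
    show c * (‖T‖ ^ 2)⁻¹ * ‖v‖ ^ 2 ≤ (inner ℂ v (e.symm v) : ℂ).re
    set u := e.symm v with hu
    have h2 : T u = v := by rw [← heT]; exact e.apply_symm_apply v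
    have h1 := key u
    rw [h2] at h1
    have h3 : (inner ℂ v (u : WithLp 2 (H₁ × WithLp 2 (H₂ × H₃))) : ℂ).re = (inner ℂ u v : ℂ).re := by
      rw [← inner_conj_symm]; exact Complex.conj_re _
    rw [h3]
    have h4 : ‖v‖ ≤ ‖T‖ * ‖u‖ := by rw [← h2]; exact T.le_opNorm u
    rcases eq_or_lt_of_le (norm_nonneg T) with hT0 | hT0
    · have hle : ‖v‖ ≤ 0 := by rw [← hT0] at h4; simpa using h4
      have hv0 : ‖v‖ = 0 := le_antisymm hle (norm_nonneg v)
      have hiz : (inner ℂ u v : ℂ) = 0 := by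
        rw [norm_eq_zero.mp hv0]
        exact inner_zero_right _
      rw [hiz, hv0]
      norm_num
    · have hT2 : 0 < ‖T‖ ^ 2 := by positivity
      have h5 : (‖T‖ ^ 2)⁻¹ * ‖v‖ ^ 2 ≤ ‖u‖ ^ 2 := by
        rw [inv_mul_le_iff₀ hT2]
        nlinarith [norm_nonneg v, norm_nonneg u]
      calc c * (‖T‖ ^ 2)⁻¹ * ‖v‖ ^ 2 = c * ((‖T‖ ^ 2)⁻¹ * ‖v‖ ^ 2) := by ring
        _ ≤ c * ‖u‖ ^ 2 := mul_le_mul_of_nonneg_left h5 hc0.le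
        _ ≤ (inner ℂ u v : ℂ).re := h1
end

section
/- Let H₁, H₂ be complex Hilbert spaces, A : H₁ → H₁ a bounded selfadjoint operator with ⟪x, A x⟫ ≥ c₀‖x‖² for all x ∈ H₁ and some c₀ > 0 (so A is boundedly invertible), B : H₂ → H₁ a bounded operator, and D : H₂ → H₂ a bounded operator such that Re⟪y, (D - B* A⁻¹ B) y⟫ ≥ c₁‖y‖² for all y ∈ H₂ and some c₁ > 0. Then there exists c > 0 such that the block operator M on H₁ ⊕ H₂ given by M(x, y) := (A x + B y, B* x + D y) satisfies Re⟪(x, y), M(x, y)⟫ ≥ c·(‖x‖² + ‖y‖²) for all (x, y) ∈ H₁ ⊕ H₂. -/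
set_option maxHeartbeats 1600000 in
/-- Schur-complement ("symmetric Gauss step") positivity for a
block operator `M(x, y) = (A x + B y, B* x + D y)` on `H₁ ⊕ H₂`. -/
theorem stmt12 {H₁ H₂ : Type*}
    [NormedAddCommGroup H₁] [InnerProductSpace ℂ H₁] [CompleteSpace H₁]
    [NormedAddCommGroup H₂] [InnerProductSpace ℂ H₂] [CompleteSpace H₂]
    (A : H₁ →L[ℂ] H₁) (hA : IsSelfAdjoint A)
    (c₀ : ℝ) (hc₀ : 0 < c₀) (hAcoer : ∀ x : H₁, c₀ * ‖x‖ ^ 2 ≤ (inner ℂ x (A x) : ℂ).re)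
    (A' : H₁ →L[ℂ] H₁) (hA'₁ : ∀ x, A (A' x) = x) (hA'₂ : ∀ x, A' (A x) = x)
    (B : H₂ →L[ℂ] H₁) (D : H₂ →L[ℂ] H₂)
    (c₁ : ℝ) (hc₁ : 0 < c₁)
    (hSchur : ∀ y : H₂,
      c₁ * ‖y‖ ^ 2 ≤ (inner ℂ y (D y - (ContinuousLinearMap.adjoint B) (A' (B y))) : ℂ).re) :
    ∃ c > 0, ∀ (x : H₁) (y : H₂),
      c * (‖x‖ ^ 2 + ‖y‖ ^ 2) ≤
        (inner ℂ x (A x + B y) + inner ℂ y ((ContinuousLinearMap.adjoint B) x + D y) : ℂ).re := by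
  obtain ⟨E, hE⟩ : ∃ E : H₂ →L[ℂ] H₁, E = A'.comp B := ⟨_, rfl⟩
  obtain ⟨K, hK⟩ : ∃ K : ℝ, K = ‖E‖ := ⟨_, rfl⟩
  have hK0 : 0 ≤ K := by rw [hK]; exact norm_nonneg _
  obtain ⟨θ, hθ⟩ : ∃ θ : ℝ, θ = min 1 (c₁ / (2 * c₀ * K ^ 2 + 1)) := ⟨_, rfl⟩
  have hden : 0 < 2 * c₀ * K ^ 2 + 1 := by positivity
  have hθpos : 0 < θ := by rw [hθ]; exact lt_min one_pos (by positivity)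
  have hθ1 : θ ≤ 1 := by rw [hθ]; exact min_le_left _ _
  have hθ2 : θ * (2 * c₀ * K ^ 2 + 1) ≤ c₁ := by
    have : θ ≤ c₁ / (2 * c₀ * K ^ 2 + 1) := by rw [hθ]; exact min_le_right _ _
    calc θ * (2 * c₀ * K ^ 2 + 1) ≤ (c₁ / (2 * c₀ * K ^ 2 + 1)) * (2 * c₀ * K ^ 2 + 1) := by
          exact mul_le_mul_of_nonneg_right this (le_of_lt hden)
      _ = c₁ := by field_simp
  refine ⟨min (θ * c₀ / 2) (c₁ / 2), lt_min (by positivity) (by positivity), ?_⟩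
  intro x y
  obtain ⟨c, hcdef⟩ : ∃ c : ℝ, c = min (θ * c₀ / 2) (c₁ / 2) := ⟨_, rfl⟩
  rw [← hcdef]
  have hc1 : c ≤ θ * c₀ / 2 := by rw [hcdef]; exact min_le_left _ _
  have hc2 : c ≤ c₁ / 2 := by rw [hcdef]; exact min_le_right _ _
  obtain ⟨z, hz⟩ : ∃ z : H₁, z = x + E y := ⟨_, rfl⟩
  -- algebraic identity
  have hAexp : A z = A x + B y := by
    simp [hz, hE, map_add, hA'₁]
  have hres : ∀ (u : H₁) (v : H₁), (inner ℂ u v : ℂ).re = (inner ℂ v u : ℂ).re := by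
    intro u v
    rw [← inner_conj_symm u v, Complex.conj_re]
  have hres₂ : ∀ (u : H₂) (v : H₂), (inner ℂ u v : ℂ).re = (inner ℂ v u : ℂ).re := by
    intro u v
    rw [← inner_conj_symm u v, Complex.conj_re]
  have h1 : (inner ℂ (E y) (A x) : ℂ).re = (inner ℂ x (B y) : ℂ).re := by
    have heq : (inner ℂ (E y) (A x) : ℂ) = inner ℂ (B y) x := by
      conv_lhs => rw [← hA.adjoint_eq]
      rw [ContinuousLinearMap.adjoint_inner_right]
      simp [hE, hA'₁]
    rw [heq, hres]
  have h2 : (inner ℂ y ((ContinuousLinearMap.adjoint B) x) : ℂ).re = (inner ℂ x (B y) : ℂ).re := by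
    rw [ContinuousLinearMap.adjoint_inner_right, hres]
  have h3 : (inner ℂ (E y) (B y) : ℂ).re
      = (inner ℂ y ((ContinuousLinearMap.adjoint B) (A' (B y))) : ℂ).re := by
    rw [ContinuousLinearMap.adjoint_inner_right, hres (E y) (B y)]
    simp [hE]
  have hid : ((inner ℂ x (A x + B y) + inner ℂ y ((ContinuousLinearMap.adjoint B) x + D y) : ℂ)).re
      = (inner ℂ z (A z) : ℂ).re
        + (inner ℂ y (D y - (ContinuousLinearMap.adjoint B) (A' (B y))) : ℂ).re := by
    rw [hAexp]
    simp only [hz, inner_add_left, inner_add_right, inner_sub_right, Complex.add_re,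
      Complex.sub_re]
    rw [h1, h2, h3]
    ring
  rw [hid]
  have hcoz := hAcoer z
  have hs := hSchur y
  have hEy : ‖E y‖ ≤ K * ‖y‖ := by rw [hK]; exact E.le_opNorm y
  have hxz : ‖x‖ ≤ ‖z‖ + ‖E y‖ := by
    have : x = z - E y := by simp [hz]
    rw [this]
    exact norm_sub_le _ _
  have hx2 : ‖x‖ ^ 2 ≤ 2 * ‖z‖ ^ 2 + 2 * (K * ‖y‖) ^ 2 := by
    have h := hxz.trans (by linarith : ‖z‖ + ‖E y‖ ≤ ‖z‖ + K * ‖y‖)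
    nlinarith [norm_nonneg x, norm_nonneg z, sq_nonneg (‖z‖ - K * ‖y‖)]
  have hy0 : (0:ℝ) ≤ ‖y‖ ^ 2 := sq_nonneg _
  have hz0 : (0:ℝ) ≤ ‖z‖ ^ 2 := sq_nonneg _
  have key : 2 * (θ * c₀ * K ^ 2) ≤ c₁ := by
    have hr : θ * (2 * c₀ * K ^ 2 + 1) = 2 * (θ * c₀ * K ^ 2) + θ := by ring
    linarith
  have hθc₀ : (0:ℝ) ≤ θ * c₀ / 2 := by positivity
  have hb1 : (θ * c₀ / 2) * ‖x‖ ^ 2 ≤ θ * c₀ * ‖z‖ ^ 2 + θ * c₀ * K ^ 2 * ‖y‖ ^ 2 := by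
    nlinarith [mul_le_mul_of_nonneg_left hx2 hθc₀]
  have hb2 : θ * c₀ * ‖z‖ ^ 2 ≤ c₀ * ‖z‖ ^ 2 := by
    nlinarith [mul_le_mul_of_nonneg_right hθ1 (mul_nonneg hc₀.le hz0)]
  have hb3 : θ * c₀ * K ^ 2 * ‖y‖ ^ 2 ≤ (c₁ / 2) * ‖y‖ ^ 2 := by
    nlinarith [mul_le_mul_of_nonneg_right key hy0]
  have hb4 : c * (‖x‖ ^ 2 + ‖y‖ ^ 2) ≤ (θ * c₀ / 2) * ‖x‖ ^ 2 + (c₁ / 2) * ‖y‖ ^ 2 := by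
    nlinarith [mul_le_mul_of_nonneg_right hc1 (sq_nonneg ‖x‖),
      mul_le_mul_of_nonneg_right hc2 hy0]
  linarith [hcoz, hs]
end

section
/- Let H, G, H_θ be complex Hilbert spaces and let C : G → G, e : H → G, b : H_θ → G, p : H_θ → H, ε, μ, σ : H → H, γ₀ : H_θ → H_θ be bounded linear operators with C, ε, μ, γ₀ selfadjoint and ⟪T, C T⟫ ≥ c_C‖T‖² for some c_C > 0 (so C is boundedly invertible). Assume there are c₁, c₂, c₃ > 0 and ν > 0 such that: (a) ⟪h, (μ - e* C⁻¹ e) h⟫ ≥ c₁‖h‖² for all h ∈ H; (b) ⟪θ, m₅₅ θ⟫ ≥ c₂‖θ‖² for all θ ∈ H_θ, where m₅₅ := γ₀ - b* C⁻¹ e (μ - e* C⁻¹ e)⁻¹ e* C⁻¹ b; (c) Re⟪h, (ν·m₄₄ + σ) h⟫ ≥ c₃‖h‖² for all h ∈ H, where m₄₄ := ε + e* C⁻¹ e - (p + e* C⁻¹ b)* m₅₅⁻¹ (p + e* C⁻¹ b) (m₅₅ is selfadjoint and positive-definite, hence boundedly invertible). Then there exists c > 0 such that the block operator on H ⊕ H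 ⊕ H_θ given by ν·[[μ - e* C⁻¹ e, 0, -e* C⁻¹ b], [0, ε + e* C⁻¹ e, p + e* C⁻¹ b], [-b* C⁻¹ e, (p + e* C⁻¹ b)*, γ₀]] + [[0,0,0],[0, σ, 0],[0,0,0]] has real part bounded below by c, i.e. the real part of its quadratic form is at least c times the squared norm. -/
open ContinuousLinearMap

private lemma reSymm13 {E : Type*} [NormedAddCommGroup E] [InnerProductSpace ℂ E]
    (a b : E) : (inner ℂ a b : ℂ).re = (inner ℂ b a : ℂ).re := by
  rw [← inner_conj_symm]
  exact Complex.conj_re _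


set_option maxHeartbeats 2000000 in
open ContinuousLinearMap in
/-- Positive-definiteness of the permuted and Gauss-reduced
thermo-piezo-electromagnetic material block
`ν·[[μ - e*C⁻¹e, 0, -e*C⁻¹b], [0, ε + e*C⁻¹e, p + e*C⁻¹b], [-b*C⁻¹e, (p + e*C⁻¹b)*, γ₀]]
 + diag(0, σ, 0)` on `H ⊕ H ⊕ H_θ`, assuming positivity of the Schur complements
`m₅₅ = γ₀ - b*C⁻¹e(μ - e*C⁻¹e)⁻¹e*C⁻¹b` and `ν·m₄₄ + σ`.
Here `C'` is the (given) bounded inverse of `C`, `W` that of `μ - e*C⁻¹e`, and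
`m₅₅'` that of `m₅₅`. -/
theorem stmt13 {H G Hθ : Type*}
    [NormedAddCommGroup H] [InnerProductSpace ℂ H] [CompleteSpace H]
    [NormedAddCommGroup G] [InnerProductSpace ℂ G] [CompleteSpace G]
    [NormedAddCommGroup Hθ] [InnerProductSpace ℂ Hθ] [CompleteSpace Hθ]
    (C : G →L[ℂ] G) (e : H →L[ℂ] G) (b : Hθ →L[ℂ] G) (p : Hθ →L[ℂ] H)
    (ε μ σ : H →L[ℂ] H) (γ₀ : Hθ →L[ℂ] Hθ)
    (hCsa : IsSelfAdjoint C) (hεsa : IsSelfAdjoint ε) (hμsa : IsSelfAdjoint μ)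
    (hγ₀sa : IsSelfAdjoint γ₀)
    (cC : ℝ) (hcC : 0 < cC) (hCcoer : ∀ T : G, cC * ‖T‖ ^ 2 ≤ (inner ℂ T (C T) : ℂ).re)
    -- `C'` is the bounded inverse of `C`
    (C' : G →L[ℂ] G) (hC'₁ : ∀ x, C (C' x) = x) (hC'₂ : ∀ x, C' (C x) = x)
    -- `W` is the bounded inverse of `μ - e* C⁻¹ e`
    (W : H →L[ℂ] H)
    (hW₁ : ∀ x, μ (W x) - (adjoint e) (C' (e (W x))) = x)
    (hW₂ : ∀ x, W (μ x - (adjoint e) (C' (e x))) = x)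
    -- `m₅₅'` is the bounded inverse of `m₅₅ = γ₀ - b* C⁻¹ e (μ - e* C⁻¹ e)⁻¹ e* C⁻¹ b`
    (m₅₅' : Hθ →L[ℂ] Hθ)
    (hm₅₅'₁ : ∀ θ, γ₀ (m₅₅' θ)
      - (adjoint b) (C' (e (W ((adjoint e) (C' (b (m₅₅' θ))))))) = θ)
    (hm₅₅'₂ : ∀ θ, m₅₅' (γ₀ θ
      - (adjoint b) (C' (e (W ((adjoint e) (C' (b θ))))))) = θ)
    (ν : ℝ) (hν : 0 < ν)
    (c₁ : ℝ) (hc₁ : 0 < c₁)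
    -- (a) `μ - e* C⁻¹ e ≥ c₁`
    (ha : ∀ h : H, c₁ * ‖h‖ ^ 2 ≤ (inner ℂ h (μ h - (adjoint e) (C' (e h))) : ℂ).re)
    (c₂ : ℝ) (hc₂ : 0 < c₂)
    -- (b) `m₅₅ ≥ c₂`
    (hb : ∀ θ : Hθ, c₂ * ‖θ‖ ^ 2 ≤
      (inner ℂ θ (γ₀ θ - (adjoint b) (C' (e (W ((adjoint e) (C' (b θ))))))) : ℂ).re)
    (c₃ : ℝ) (hc₃ : 0 < c₃)
    -- (c) `Re (ν m₄₄ + σ) ≥ c₃`, with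
    -- `m₄₄ = ε + e* C⁻¹ e - (p + e* C⁻¹ b)* m₅₅⁻¹ (p + e* C⁻¹ b)`
    (hcc : ∀ h : H, c₃ * ‖h‖ ^ 2 ≤
      (inner ℂ h ((ν : ℂ) • (ε h + (adjoint e) (C' (e h))
          - (p + (adjoint e).comp (C'.comp b))
              (m₅₅' ((adjoint (p + (adjoint e).comp (C'.comp b))) h))) + σ h) : ℂ).re) :
    ∃ c > 0, ∀ (x y : H) (θ : Hθ),
      c * (‖x‖ ^ 2 + ‖y‖ ^ 2 + ‖θ‖ ^ 2) ≤
        ((inner ℂ x ((ν : ℂ) • (μ x - (adjoint e) (C' (e x)) - (adjoint e) (C' (b θ)))) : ℂ)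
          + inner ℂ y ((ν : ℂ) • (ε y + (adjoint e) (C' (e y))
              + ((p + (adjoint e).comp (C'.comp b)) θ)) + σ y)
          + inner ℂ θ ((ν : ℂ) • (-((adjoint b) (C' (e x)))
              + (adjoint (p + (adjoint e).comp (C'.comp b))) y + γ₀ θ))).re := by

  have hCadj : adjoint C = C := ContinuousLinearMap.isSelfAdjoint_iff'.mp hCsa
  have hμadj : adjoint μ = μ := ContinuousLinearMap.isSelfAdjoint_iff'.mp hμsa
  have hγadj : adjoint γ₀ = γ₀ := ContinuousLinearMap.isSelfAdjoint_iff'.mp hγ₀sa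
  have hC's : ∀ a c : G, (inner ℂ a (C' c) : ℂ) = inner ℂ (C' a) c := by
    intro a c
    calc (inner ℂ a (C' c) : ℂ) = inner ℂ (C (C' a)) (C' c) := by rw [hC'₁]
      _ = inner ℂ (adjoint C (C' a)) (C' c) := by rw [hCadj]
      _ = inner ℂ (C' a) (C (C' c)) := adjoint_inner_left _ _ _
      _ = inner ℂ (C' a) c := by rw [hC'₁]
  have hμs : ∀ a c : H, (inner ℂ a (μ c) : ℂ) = inner ℂ (μ a) c := by
    intro a c
    conv_lhs => rw [← hμadj]
    exact adjoint_inner_right _ _ _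
  have hγs : ∀ a c : Hθ, (inner ℂ a (γ₀ c) : ℂ) = inner ℂ (γ₀ a) c := by
    intro a c
    conv_lhs => rw [← hγadj]
    exact adjoint_inner_right _ _ _
  have hAs : ∀ a c : H, (inner ℂ a (μ c - adjoint e (C' (e c))) : ℂ)
      = inner ℂ (μ a - adjoint e (C' (e a))) c := by
    intro a c
    rw [inner_sub_right, inner_sub_left, hμs]
    congr 1
    calc (inner ℂ a (adjoint e (C' (e c))) : ℂ)
        = inner ℂ (e a) (C' (e c)) := adjoint_inner_right _ _ _
      _ = inner ℂ (C' (e a)) (e c) := hC's _ _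
      _ = inner ℂ (adjoint e (C' (e a))) c := (adjoint_inner_left _ _ _).symm
  have hWs : ∀ a c : H, (inner ℂ (W a) c : ℂ) = inner ℂ a (W c) := by
    intro a c
    calc (inner ℂ (W a) c : ℂ)
        = inner ℂ (W a) (μ (W c) - adjoint e (C' (e (W c)))) := by rw [hW₁]
      _ = inner ℂ (μ (W a) - adjoint e (C' (e (W a)))) (W c) := hAs _ _
      _ = inner ℂ a (W c) := by rw [hW₁]
  have hbKs : ∀ (a : Hθ) (c : H), (inner ℂ a (adjoint b (C' (e c))) : ℂ)
      = inner ℂ (adjoint e (C' (b a))) c := by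
    intro a c
    rw [adjoint_inner_right, hC's, ← adjoint_inner_left]
  have hM55s : ∀ a c : Hθ,
      (inner ℂ a (γ₀ c - adjoint b (C' (e (W (adjoint e (C' (b c))))))) : ℂ)
      = inner ℂ (γ₀ a - adjoint b (C' (e (W (adjoint e (C' (b a))))))) c := by
    intro a c
    rw [inner_sub_right, inner_sub_left, hγs]
    congr 1
    calc (inner ℂ a (adjoint b (C' (e (W (adjoint e (C' (b c))))))) : ℂ)
        = inner ℂ (adjoint e (C' (b a))) (W (adjoint e (C' (b c)))) := hbKs _ _
      _ = inner ℂ (W (adjoint e (C' (b a)))) (adjoint e (C' (b c))) := (hWs _ _).symm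
      _ = inner ℂ (adjoint b (C' (e (W (adjoint e (C' (b a))))))) c := by
          rw [adjoint_inner_right, hC's, ← adjoint_inner_left]
  set P : Hθ →L[ℂ] H := p + (adjoint e).comp (C'.comp b) with hPdef
  set L1 : Hθ →L[ℂ] H := W.comp ((adjoint e).comp (C'.comp b)) with hL1def
  set L2 : H →L[ℂ] Hθ := m₅₅'.comp (adjoint P) with hL2def
  set M : ℝ := ‖L1‖ with hMdef
  set N : ℝ := ‖L2‖ with hNdef
  have hM : 0 ≤ M := norm_nonneg _
  have hN : 0 ≤ N := norm_nonneg _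
  set D0 : ℝ := 3 + 4*M^2 + 2*N^2 + 4*M^2*N^2 with hD0def
  have hD0 : 0 < D0 := by positivity
  set m : ℝ := min (ν*c₁) (min (ν*c₂) c₃) with hmdef
  have hm : 0 < m := lt_min (by positivity) (lt_min (by positivity) hc₃)
  refine ⟨m / D0, by positivity, ?_⟩
  intro x y θ
  set u : H := W (adjoint e (C' (b θ))) with hudef
  set v : Hθ := m₅₅' (adjoint P y) with hvdef
  have hu : μ u - adjoint e (C' (e u)) = adjoint e (C' (b θ)) := hW₁ _
  have hv : γ₀ v - adjoint b (C' (e (W (adjoint e (C' (b v)))))) = adjoint P y := hm₅₅'₁ _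
  have harg1 : μ (x - u) - adjoint e (C' (e (x - u)))
      = (μ x - adjoint e (C' (e x))) - adjoint e (C' (b θ)) := by
    rw [← hu]
    simp only [map_sub]
    abel
  have H1 : ν * (c₁ * ‖x - u‖ ^ 2)
      ≤ ν * (inner ℂ (x - u) ((μ x - adjoint e (C' (e x))) - adjoint e (C' (b θ))) : ℂ).re := by
    have h := ha (x - u)
    rw [harg1] at h
    exact mul_le_mul_of_nonneg_left h hν.le
  have harg2 : γ₀ (θ + v) - adjoint b (C' (e (W (adjoint e (C' (b (θ + v)))))))
      = (γ₀ θ - adjoint b (C' (e u))) + adjoint P y := by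
    rw [← hv, hudef]
    simp only [map_add]
    abel
  have H2 : ν * (c₂ * ‖θ + v‖ ^ 2)
      ≤ ν * (inner ℂ (θ + v) ((γ₀ θ - adjoint b (C' (e u))) + adjoint P y) : ℂ).re := by
    have h := hb (θ + v)
    rw [harg2] at h
    exact mul_le_mul_of_nonneg_left h hν.le
  have H3 : c₃ * ‖y‖ ^ 2
      ≤ (inner ℂ y ((ν:ℂ) • (ε y + adjoint e (C' (e y)) - P v) + σ y) : ℂ).re := by
    have h := hcc y
    rw [← hvdef] at h
    exact h
  have r1 : ν * ((inner ℂ u (μ x) : ℂ).re - (inner ℂ u (adjoint e (C' (e x))) : ℂ).re)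
      = ν * (inner ℂ x (adjoint e (C' (b θ))) : ℂ).re := by
    rw [← Complex.sub_re, ← inner_sub_right, hAs u x, hu, reSymm13]
  have r2 : ν * (inner ℂ θ (adjoint b (C' (e x))) : ℂ).re
      = ν * (inner ℂ x (adjoint e (C' (b θ))) : ℂ).re := by
    rw [hbKs θ x, reSymm13]
  have r3 : ν * (inner ℂ θ (adjoint b (C' (e u))) : ℂ).re
      = ν * (inner ℂ u (adjoint e (C' (b θ))) : ℂ).re := by
    rw [hbKs θ u, reSymm13]
  have r5 : ν * ((inner ℂ v (γ₀ θ) : ℂ).re - (inner ℂ v (adjoint b (C' (e u))) : ℂ).re)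
      = ν * (inner ℂ y (P θ) : ℂ).re := by
    rw [← Complex.sub_re, ← inner_sub_right, hudef, hM55s v θ, hv, adjoint_inner_left]
  have r6 : ν * (inner ℂ v (adjoint P y) : ℂ).re = ν * (inner ℂ y (P v) : ℂ).re := by
    rw [adjoint_inner_right, reSymm13]
  have key : ((inner ℂ x ((ν : ℂ) • (μ x - (adjoint e) (C' (e x)) - (adjoint e) (C' (b θ)))) : ℂ)
          + inner ℂ y ((ν : ℂ) • (ε y + (adjoint e) (C' (e y)) + (P θ)) + σ y)
          + inner ℂ θ ((ν : ℂ) • (-((adjoint b) (C' (e x))) + (adjoint P) y + γ₀ θ))).re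
      = ν * (inner ℂ (x - u) ((μ x - adjoint e (C' (e x))) - adjoint e (C' (b θ))) : ℂ).re
        + ν * (inner ℂ (θ + v) ((γ₀ θ - adjoint b (C' (e u))) + adjoint P y) : ℂ).re
        + (inner ℂ y ((ν:ℂ) • (ε y + adjoint e (C' (e y)) - P v) + σ y) : ℂ).re := by
    simp only [inner_add_right, inner_sub_right, inner_add_left, inner_sub_left,
      inner_smul_right, inner_neg_right, smul_eq_mul, Complex.add_re, Complex.sub_re,
      Complex.neg_re, Complex.mul_re, Complex.ofReal_re, Complex.ofReal_im, zero_mul,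
      sub_zero]
    linarith [r1, r2, r3, r5, r6]
  rw [key]
  have nu : ‖u‖ ≤ M * ‖θ‖ := by
    have h : u = L1 θ := by simp [hudef, hL1def]
    rw [h]
    exact L1.le_opNorm θ
  have nv : ‖v‖ ≤ N * ‖y‖ := by
    have h : v = L2 y := by simp [hvdef, hL2def]
    rw [h]
    exact L2.le_opNorm y
  have hxb : ‖x‖ ≤ ‖x - u‖ + M * ‖θ‖ := by
    have h := norm_add_le (x - u) u
    simp only [sub_add_cancel] at h
    linarith
  have hθb : ‖θ‖ ≤ ‖θ + v‖ + N * ‖y‖ := by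
    have h := norm_sub_le (θ + v) v
    simp only [add_sub_cancel_right] at h
    linarith
  have hx2 : ‖x‖^2 ≤ 2*‖x - u‖^2 + 2*(M*‖θ‖)^2 := by
    nlinarith [hxb, norm_nonneg x, norm_nonneg (x - u), mul_nonneg hM (norm_nonneg θ),
      sq_nonneg (‖x - u‖ - M*‖θ‖)]
  have hθ2 : ‖θ‖^2 ≤ 2*‖θ + v‖^2 + 2*(N*‖y‖)^2 := by
    nlinarith [hθb, norm_nonneg θ, norm_nonneg (θ + v), mul_nonneg hN (norm_nonneg y),
      sq_nonneg (‖θ + v‖ - N*‖y‖)]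
  have hmul : 2*M^2*‖θ‖^2 ≤ 2*M^2*(2*‖θ + v‖^2 + 2*(N*‖y‖)^2) :=
    mul_le_mul_of_nonneg_left hθ2 (by positivity)
  have key2 : ‖x‖^2 + ‖y‖^2 + ‖θ‖^2 ≤ D0 * (‖x - u‖^2 + ‖θ + v‖^2 + ‖y‖^2) := by
    rw [hD0def]
    linarith [hx2, hθ2, hmul,
      mul_nonneg (sq_nonneg M) (sq_nonneg ‖x - u‖),
      mul_nonneg (sq_nonneg N) (sq_nonneg ‖x - u‖),
      mul_nonneg (mul_nonneg (sq_nonneg M) (sq_nonneg N)) (sq_nonneg ‖x - u‖),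
      mul_nonneg (sq_nonneg N) (sq_nonneg ‖θ + v‖),
      mul_nonneg (mul_nonneg (sq_nonneg M) (sq_nonneg N)) (sq_nonneg ‖θ + v‖),
      mul_nonneg (sq_nonneg M) (sq_nonneg ‖y‖),
      sq_nonneg ‖x - u‖, sq_nonneg ‖θ + v‖, sq_nonneg ‖y‖]
  have e1 : m ≤ ν*c₁ := min_le_left _ _
  have e2 : m ≤ ν*c₂ := le_trans (min_le_right _ _) (min_le_left _ _)
  have e3 : m ≤ c₃ := le_trans (min_le_right _ _) (min_le_right _ _)
  have f1 := mul_le_mul_of_nonneg_right e1 (sq_nonneg ‖x - u‖)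
  have f2 := mul_le_mul_of_nonneg_right e2 (sq_nonneg ‖θ + v‖)
  have f3 := mul_le_mul_of_nonneg_right e3 (sq_nonneg ‖y‖)
  have step : m / D0 * (‖x‖ ^ 2 + ‖y‖ ^ 2 + ‖θ‖ ^ 2)
      ≤ m * ‖x - u‖^2 + m * ‖θ + v‖^2 + m * ‖y‖^2 := by
    have h1 : m / D0 * (‖x‖ ^ 2 + ‖y‖ ^ 2 + ‖θ‖ ^ 2)
        ≤ m / D0 * (D0 * (‖x - u‖^2 + ‖θ + v‖^2 + ‖y‖^2)) :=
      mul_le_mul_of_nonneg_left key2 (by positivity)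
    have h2 : m / D0 * (D0 * (‖x - u‖^2 + ‖θ + v‖^2 + ‖y‖^2))
        = m * ‖x - u‖^2 + m * ‖θ + v‖^2 + m * ‖y‖^2 := by
      field_simp
    linarith
  linarith [step, f1, f2, f3, H1, H2, H3]
end

section
/- Let H₀, G, H, H_θ, H_q and B₁, B₂, B₃ be complex Hilbert spaces. Let ρ : H₀ → H₀ be bounded selfadjoint with ⟪v, ρ v⟫ ≥ c_ρ‖v‖² (c_ρ > 0); let C : G → G be bounded selfadjoint with ⟪T, C T⟫ ≥ c_C‖T‖² (c_C > 0); let e : H → G, b : H_θ → G, p : H_θ → H, ε, μ, σ : H → H, γ₀ : H_θ → H_θ be bounded with ε, μ, γ₀ selfadjoint; let κ₀, κ₁ : H_q → H_q be bounded with κ₁ selfadjoint and κ₀ bijective; let β : B₁ → B₂, Q : B₂ → B₃, α : B₃ → B₃ be bounded and C_b : B₂ → B₂ bounded skew-adjoint. Define m₅₅ := γ₀ - b* C⁻¹ e (μ - e* C⁻¹ e)⁻¹ e* C⁻¹ b and m₄₄ := ε + e* C⁻¹ e - (p + e* C⁻¹ b)* m₅₅⁻¹ (p + e* C⁻¹ b),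 and assume there exist ν₁ > ‖α‖ and c₁, c₂, c₃, c₄ > 0 such that ⟪h, (μ - e* C⁻¹ e) h⟫ ≥ c₁‖h‖², ⟪θ, m₅₅ θ⟫ ≥ c₂‖θ‖², and for all ν ≥ ν₁: Re⟪h, (ν m₄₄ + σ) h⟫ ≥ c₃‖h‖² and Re⟪q, (ν κ₁ + κ₀⁻¹) q⟫ ≥ c₄‖q‖². For z ∈ ℂ with Re z ≥ ν ≥ ν₁ let T(z) be the bounded operator on B₁ ⊕ B₂ ⊕ B₃ given by the block matrix [[1, -β*, -β* Q*],[β, 1, -C_b Q*],[Qβ, -Q C_b, 1 + z⁻¹ α]] (which is boundedly invertible since its real part is ≥ 1 - ‖α‖/ν > 0), and let 𝒦(z) := T(z)⁻¹. Let 𝒩' be the bounded selfadjoint operator on H ⊕ G ⊕ H ⊕ H_θ given by [[ε + e* C⁻¹ e, 0, 0, p + e* C⁻¹ b],[0, C⁻¹, C⁻¹ e, C⁻¹ b],[0, e* C⁻¹, μ, 0],[(p + e* C⁻¹ b)*, b* C⁻¹, 0, γ₀ + b* C⁻¹ b]] and ℳ' := diag(σ, 0, 0, 0). Then there exist ν₀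 ≥ ν₁ and c > 0 such that for all ν ≥ ν₀ and all z ∈ ℂ with Re z ≥ ν, the bounded operator on H₀ ⊕ (H ⊕ G ⊕ H ⊕ H_θ) ⊕ (B₁ ⊕ B₂ ⊕ B₃) ⊕ H_q given by ν·diag(ρ, 𝒩', 0, κ₁) + diag(0, ℳ', 𝒦(z), κ₀⁻¹) satisfies Re⟪X, (ν·diag(ρ, 𝒩', 0, κ₁) + diag(0, ℳ', 𝒦(z), κ₀⁻¹)) X⟫ ≥ c‖X‖² for all X. -/
open ContinuousLinearMap in
private theorem aux_re_symm {E : Type*} [NormedAddCommGroup E] [InnerProductSpace ℂ E]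
    (x y : E) : (inner ℂ x y : ℂ).re = (inner ℂ y x : ℂ).re := by
  rw [← inner_conj_symm, Complex.conj_re]

open ContinuousLinearMap in
private theorem aux_adj_inv {E : Type*} [NormedAddCommGroup E] [InnerProductSpace ℂ E]
    [CompleteSpace E] {A A' : E →L[ℂ] E} (hA : adjoint A = A)
    (h1 : ∀ x, A (A' x) = x) : adjoint A' = A' := by
  have hcomp : A ∘L A' = ContinuousLinearMap.id ℂ E := by ext x; exact h1 x
  have h3 : adjoint A' ∘L A = ContinuousLinearMap.id ℂ E := by
    have h4 := congrArg adjoint hcomp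
    rwa [adjoint_comp, adjoint_id, hA] at h4
  ext x
  calc adjoint A' x = (adjoint A' ∘L A) (A' x) := by rw [ContinuousLinearMap.comp_apply, h1]
    _ = A' x := by rw [h3]; rfl

private theorem aux_smul_re {E : Type*} [NormedAddCommGroup E] [InnerProductSpace ℂ E]
    (ν : ℝ) (x v : E) : (inner ℂ x ((ν : ℂ) • v) : ℂ).re = ν * (inner ℂ x v : ℂ).re := by
  rw [inner_smul_right]; simp [Complex.mul_re]

private theorem aux_sq3 {x a b c : ℝ} (h : x ≤ a + b + c) (hx : 0 ≤ x)
    (ha : 0 ≤ a) (hb : 0 ≤ b) (hc : 0 ≤ c) :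
    x ^ 2 ≤ 3 * a ^ 2 + 3 * b ^ 2 + 3 * c ^ 2 := by
  nlinarith [mul_le_mul h h hx (by linarith : (0:ℝ) ≤ a + b + c), sq_nonneg (a - b),
    sq_nonneg (a - c), sq_nonneg (b - c)]

private theorem aux_sq2 {x a b : ℝ} (h : x ≤ a + b) (hx : 0 ≤ x)
    (ha : 0 ≤ a) (hb : 0 ≤ b) : x ^ 2 ≤ 2 * a ^ 2 + 2 * b ^ 2 := by
  nlinarith [mul_le_mul h h hx (by linarith : (0:ℝ) ≤ a + b), sq_nonneg (a - b)]

private theorem aux_self_re {E : Type*} [NormedAddCommGroup E] [InnerProductSpace ℂ E]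
    (x : E) : (inner ℂ x x : ℂ).re = ‖x‖ ^ 2 := by
  have h := inner_self_eq_norm_sq (𝕜 := ℂ) x
  simpa using h


set_option maxHeartbeats 2000000 in
open ContinuousLinearMap in
/-- The uniform positive-definiteness estimate `ν𝒩 + Re ℳ(z) ≫ 0` for the
thermo-piezo-electromagnetic material law with impedance boundary conditions: under the
well-posedness hypotheses on `ρ, C, e, b, p, ε, μ, σ, γ₀, κ₀, κ₁` and the boundary operators
`β, Q, α, C_b`, there are `ν₀ ≥ ν₁` and `c > 0` such that for all `ν ≥ ν₀` and `Re z ≥ ν`, the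
block operator `ν·diag(ρ, 𝒩', 0, κ₁) + diag(0, ℳ', 𝒦(z), κ₀⁻¹)` has real part `≥ c`, where
`𝒦(z)` is the inverse of the boundary impedance block `T(z)`. -/
theorem stmt14 {H₀ G H Hθ Hq B₁ B₂ B₃ : Type*}
    [NormedAddCommGroup H₀] [InnerProductSpace ℂ H₀] [CompleteSpace H₀]
    [NormedAddCommGroup G] [InnerProductSpace ℂ G] [CompleteSpace G]
    [NormedAddCommGroup H] [InnerProductSpace ℂ H] [CompleteSpace H]
    [NormedAddCommGroup Hθ] [InnerProductSpace ℂ Hθ] [CompleteSpace Hθ]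
    [NormedAddCommGroup Hq] [InnerProductSpace ℂ Hq] [CompleteSpace Hq]
    [NormedAddCommGroup B₁] [InnerProductSpace ℂ B₁] [CompleteSpace B₁]
    [NormedAddCommGroup B₂] [InnerProductSpace ℂ B₂] [CompleteSpace B₂]
    [NormedAddCommGroup B₃] [InnerProductSpace ℂ B₃] [CompleteSpace B₃]
    -- the mass density `ρ`
    (ρ : H₀ →L[ℂ] H₀) (hρsa : IsSelfAdjoint ρ)
    (cρ : ℝ) (hcρ : 0 < cρ) (hρcoer : ∀ v : H₀, cρ * ‖v‖ ^ 2 ≤ (inner ℂ v (ρ v) : ℂ).re)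
    -- the elasticity tensor `C`, with bounded inverse `C'`
    (C : G →L[ℂ] G) (hCsa : IsSelfAdjoint C)
    (cC : ℝ) (hcC : 0 < cC) (hCcoer : ∀ T : G, cC * ‖T‖ ^ 2 ≤ (inner ℂ T (C T) : ℂ).re)
    (C' : G →L[ℂ] G) (hC'₁ : ∀ x, C (C' x) = x) (hC'₂ : ∀ x, C' (C x) = x)
    -- the coupling and material operators
    (e : H →L[ℂ] G) (b : Hθ →L[ℂ] G) (p : Hθ →L[ℂ] H)
    (ε μ σ : H →L[ℂ] H) (hεsa : IsSelfAdjoint ε) (hμsa : IsSelfAdjoint μ)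
    (γ₀ : Hθ →L[ℂ] Hθ) (hγ₀sa : IsSelfAdjoint γ₀)
    -- the Maxwell–Cattaneo–Vernotte coefficients, `κ₀` bijective with inverse `κ₀'`
    (κ₀ κ₁ : Hq →L[ℂ] Hq) (hκ₁sa : IsSelfAdjoint κ₁)
    (κ₀' : Hq →L[ℂ] Hq) (hκ₀'₁ : ∀ x, κ₀ (κ₀' x) = x) (hκ₀'₂ : ∀ x, κ₀' (κ₀ x) = x)
    -- the boundary operators, `C_b = curl_BD` skew-adjoint
    (β : B₁ →L[ℂ] B₂) (Q : B₂ →L[ℂ] B₃) (α : B₃ →L[ℂ] B₃)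
    (C_b : B₂ →L[ℂ] B₂) (hCb : adjoint C_b = -C_b)
    -- `W` is the bounded inverse of `μ - e* C⁻¹ e`
    (W : H →L[ℂ] H)
    (hW₁ : ∀ x, μ (W x) - (adjoint e) (C' (e (W x))) = x)
    (hW₂ : ∀ x, W (μ x - (adjoint e) (C' (e x))) = x)
    -- `m₅₅'` is the bounded inverse of `m₅₅ = γ₀ - b* C⁻¹ e (μ - e* C⁻¹ e)⁻¹ e* C⁻¹ b`
    (m₅₅' : Hθ →L[ℂ] Hθ)
    (hm₅₅'₁ : ∀ θ, γ₀ (m₅₅' θ)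
      - (adjoint b) (C' (e (W ((adjoint e) (C' (b (m₅₅' θ))))))) = θ)
    (hm₅₅'₂ : ∀ θ, m₅₅' (γ₀ θ
      - (adjoint b) (C' (e (W ((adjoint e) (C' (b θ))))))) = θ)
    -- the positivity hypotheses
    (ν₁ : ℝ) (hν₁ : ‖α‖ < ν₁)
    (c₁ : ℝ) (hc₁ : 0 < c₁)
    (h₁ : ∀ h : H, c₁ * ‖h‖ ^ 2 ≤ (inner ℂ h (μ h - (adjoint e) (C' (e h))) : ℂ).re)
    (c₂ : ℝ) (hc₂ : 0 < c₂)
    (h₂ : ∀ θ : Hθ, c₂ * ‖θ‖ ^ 2 ≤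
      (inner ℂ θ (γ₀ θ - (adjoint b) (C' (e (W ((adjoint e) (C' (b θ))))))) : ℂ).re)
    (c₃ : ℝ) (hc₃ : 0 < c₃)
    -- `Re (ν m₄₄ + σ) ≥ c₃` for all `ν ≥ ν₁`, with
    -- `m₄₄ = ε + e* C⁻¹ e - (p + e* C⁻¹ b) m₅₅⁻¹ (p + e* C⁻¹ b)*`
    (h₃ : ∀ ν : ℝ, ν₁ ≤ ν → ∀ h : H, c₃ * ‖h‖ ^ 2 ≤
      (inner ℂ h ((ν : ℂ) • (ε h + (adjoint e) (C' (e h))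
          - (p + (adjoint e).comp (C'.comp b))
              (m₅₅' ((adjoint (p + (adjoint e).comp (C'.comp b))) h))) + σ h) : ℂ).re)
    (c₄ : ℝ) (hc₄ : 0 < c₄)
    -- `Re (ν κ₁ + κ₀⁻¹) ≥ c₄` for all `ν ≥ ν₁`
    (h₄ : ∀ ν : ℝ, ν₁ ≤ ν → ∀ q : Hq, c₄ * ‖q‖ ^ 2 ≤
      (inner ℂ q ((ν : ℂ) • κ₁ q + κ₀' q) : ℂ).re) :
    ∃ ν₀, ν₁ ≤ ν₀ ∧ ∃ c > 0, ∀ ν : ℝ, ν₀ ≤ ν → ∀ z : ℂ, ν ≤ z.re →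
      -- `Tz` is the boundary impedance block `T(z)` and `Kz = 𝒦(z)` its bounded inverse
      ∀ Tz Kz : WithLp 2 (B₁ × WithLp 2 (B₂ × B₃)) →L[ℂ] WithLp 2 (B₁ × WithLp 2 (B₂ × B₃)),
        (∀ (x : B₁) (y : B₂) (w : B₃),
          Tz ((WithLp.equiv 2 (B₁ × WithLp 2 (B₂ × B₃))).symm
              (x, (WithLp.equiv 2 (B₂ × B₃)).symm (y, w))) =
            (WithLp.equiv 2 (B₁ × WithLp 2 (B₂ × B₃))).symm
              (x - (adjoint β) y - (adjoint β) ((adjoint Q) w),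
                (WithLp.equiv 2 (B₂ × B₃)).symm
                  (β x + y - C_b ((adjoint Q) w),
                    Q (β x) - Q (C_b y) + w + z⁻¹ • α w))) →
        (∀ v, Tz (Kz v) = v) → (∀ v, Kz (Tz v) = v) →
        ∀ (v₀ : H₀) (x₁ : H) (xG : G) (x₃ : H) (xθ : Hθ)
          (vb : WithLp 2 (B₁ × WithLp 2 (B₂ × B₃))) (q : Hq),
          c * (‖v₀‖ ^ 2 + ‖x₁‖ ^ 2 + ‖xG‖ ^ 2 + ‖x₃‖ ^ 2 + ‖xθ‖ ^ 2 + ‖vb‖ ^ 2 + ‖q‖ ^ 2) ≤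
            ((inner ℂ v₀ ((ν : ℂ) • ρ v₀) : ℂ)
              + inner ℂ x₁ ((ν : ℂ) • (ε x₁ + (adjoint e) (C' (e x₁))
                  + ((p + (adjoint e).comp (C'.comp b)) xθ)) + σ x₁)
              + inner ℂ xG ((ν : ℂ) • (C' xG + C' (e x₃) + C' (b xθ)))
              + inner ℂ x₃ ((ν : ℂ) • ((adjoint e) (C' xG) + μ x₃))
              + inner ℂ xθ ((ν : ℂ) • ((adjoint (p + (adjoint e).comp (C'.comp b))) x₁
                  + (adjoint b) (C' xG) + γ₀ xθ + (adjoint b) (C' (b xθ))))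
              + inner ℂ vb (Kz vb)
              + inner ℂ q ((ν : ℂ) • κ₁ q + κ₀' q)).re := by
  classical
  -- selfadjointness facts
  have hCa : adjoint C = C := ContinuousLinearMap.isSelfAdjoint_iff'.mp hCsa
  have hμa : adjoint μ = μ := ContinuousLinearMap.isSelfAdjoint_iff'.mp hμsa
  have hγa : adjoint γ₀ = γ₀ := ContinuousLinearMap.isSelfAdjoint_iff'.mp hγ₀sa
  have hC'a : adjoint C' = C' := aux_adj_inv hCa hC'₁
  have hC'sym : ∀ u v : G, (inner ℂ u (C' v) : ℂ) = inner ℂ (C' u) v := by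
    intro u v
    have h := adjoint_inner_right C' u v
    rwa [hC'a] at h
  obtain ⟨M₁, hM₁def⟩ : ∃ x : H →L[ℂ] H, x = μ - (adjoint e).comp (C'.comp e) := ⟨_, rfl⟩
  have hM₁app : ∀ x, M₁ x = μ x - adjoint e (C' (e x)) := fun x => by rw [hM₁def]; rfl
  have hM₁a : adjoint M₁ = M₁ := by
    rw [hM₁def, map_sub, hμa, adjoint_comp, adjoint_comp, adjoint_adjoint, hC'a,
      ContinuousLinearMap.comp_assoc]
  have hW₁' : ∀ x, M₁ (W x) = x := fun x => by rw [hM₁app]; exact hW₁ x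
  have hWa : adjoint W = W := aux_adj_inv hM₁a hW₁'
  obtain ⟨m₅, hm₅def⟩ : ∃ x : Hθ →L[ℂ] Hθ, x = γ₀ - (adjoint b).comp (C'.comp (e.comp (W.comp ((adjoint e).comp (C'.comp b))))) := ⟨_, rfl⟩
  have hm₅app : ∀ t, m₅ t = γ₀ t - adjoint b (C' (e (W (adjoint e (C' (b t)))))) := fun t => by rw [hm₅def]; rfl
  have hm₅a : adjoint m₅ = m₅ := by
    rw [hm₅def, map_sub, hγa]
    congr 1
    simp only [adjoint_comp, adjoint_adjoint, hC'a, hWa, ContinuousLinearMap.comp_assoc]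
  have hm₅1 : ∀ t, m₅ (m₅₅' t) = t := fun t => by rw [hm₅app]; exact hm₅₅'₁ t
  have hSadj : adjoint (p + (adjoint e).comp (C'.comp b))
      = adjoint p + (adjoint b).comp (C'.comp e) := by
    rw [map_add, adjoint_comp, adjoint_comp, adjoint_adjoint, hC'a,
      ContinuousLinearMap.comp_assoc]
  -- constants
  have hν₁pos : 0 < ν₁ := lt_of_le_of_lt (norm_nonneg α) hν₁
  obtain ⟨Kθ, hKθdef⟩ : ∃ x : ℝ, x = ‖m₅₅'‖ * (‖adjoint p‖ + ‖adjoint b‖ * (‖C'‖ * ‖e‖)) := ⟨_, rfl⟩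
  obtain ⟨KW, hKWdef⟩ : ∃ x : ℝ, x = ‖W‖ * (‖adjoint e‖ * (‖C'‖ * ‖b‖)) := ⟨_, rfl⟩
  have hKθ0 : 0 ≤ Kθ := by rw [hKθdef]; positivity
  have hKW0 : 0 ≤ KW := by rw [hKWdef]; positivity
  obtain ⟨K, hKdef⟩ : ∃ x : ℝ, x = 1 + (1 + 2*Kθ^2 + 4*KW^2*Kθ^2 + 12*‖e‖^2*KW^2*Kθ^2 + 6*‖b‖^2*Kθ^2)
      + (3*‖C‖^2) + (2 + 6*‖e‖^2) + (2 + 4*KW^2 + 12*‖e‖^2*KW^2 + 6*‖b‖^2) := ⟨_, rfl⟩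
  have hK0 : 0 < K := by rw [hKdef]; positivity
  obtain ⟨D, hDdef⟩ : ∃ x : ℝ, x = 1 + (3 + 3*‖β‖^2 + 3*(‖Q‖*‖β‖)^2)
      + (3*‖adjoint β‖^2 + 3 + 3*(‖Q‖*‖C_b‖)^2)
      + (3*(‖adjoint β‖*‖adjoint Q‖)^2 + 3*(‖C_b‖*‖adjoint Q‖)^2 + 12) := ⟨_, rfl⟩
  have hD0 : 0 < D := by rw [hDdef]; positivity
  obtain ⟨δ₁, hδ₁def⟩ : ∃ x : ℝ, x = 1 - ‖α‖ / ν₁ := ⟨_, rfl⟩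
  have hδ₁0 : 0 < δ₁ := by
    rw [hδ₁def, sub_pos, div_lt_one hν₁pos]; exact hν₁
  obtain ⟨cm, hcmdef⟩ : ∃ x : ℝ, x = min cC (min c₁ c₂) := ⟨_, rfl⟩
  have hcm0 : 0 < cm := by rw [hcmdef]; exact lt_min hcC (lt_min hc₁ hc₂)
  obtain ⟨cmid, hcmiddef⟩ : ∃ x : ℝ, x = c₃ / K := ⟨_, rfl⟩
  have hcmid0 : 0 < cmid := by rw [hcmiddef]; exact div_pos hc₃ hK0
  obtain ⟨cB, hcBdef⟩ : ∃ x : ℝ, x = δ₁ / D := ⟨_, rfl⟩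
  have hcB0 : 0 < cB := by rw [hcBdef]; exact div_pos hδ₁0 hD0
  obtain ⟨cfin, hcfindef⟩ : ∃ x : ℝ, x = min (ν₁ * cρ) (min cmid (min cB c₄)) := ⟨_, rfl⟩
  have hcfin0 : 0 < cfin := by
    rw [hcfindef]
    exact lt_min (mul_pos hν₁pos hcρ) (lt_min hcmid0 (lt_min hcB0 hc₄))
  have hcf1 : cfin ≤ ν₁ * cρ := by rw [hcfindef]; exact min_le_left _ _
  have hcf2 : cfin ≤ cmid := by
    rw [hcfindef]; exact le_trans (min_le_right _ _) (min_le_left _ _)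
  have hcf3 : cfin ≤ cB := by
    rw [hcfindef]
    exact le_trans (min_le_right _ _) (le_trans (min_le_right _ _) (min_le_left _ _))
  have hcf4 : cfin ≤ c₄ := by
    rw [hcfindef]
    exact le_trans (min_le_right _ _) (le_trans (min_le_right _ _) (min_le_right _ _))
  refine ⟨max ν₁ (c₃ / cm), le_max_left _ _, cfin, hcfin0, ?_⟩
  intro ν hν z hz Tz Kz hTzdef hTK hKT v₀ x₁ xG x₃ xθ vb q
  have hνν₁ : ν₁ ≤ ν := le_trans (le_max_left _ _) hν
  have hν0 : 0 < ν := lt_of_lt_of_le hν₁pos hνν₁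
  have hνcm : c₃ ≤ ν * cm := by
    have h8 : c₃ / cm ≤ ν := le_trans (le_max_right _ _) hν
    calc c₃ = (c₃ / cm) * cm := (div_mul_cancel₀ c₃ (ne_of_gt hcm0)).symm
      _ ≤ ν * cm := mul_le_mul_of_nonneg_right h8 (le_of_lt hcm0)
  -- term (v₀)
  have ht0 : cfin * ‖v₀‖ ^ 2 ≤ (inner ℂ v₀ ((ν : ℂ) • ρ v₀) : ℂ).re := by
    rw [aux_smul_re]
    have h9 := hρcoer v₀
    have hA := mul_le_mul_of_nonneg_right hcf1 (sq_nonneg ‖v₀‖)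
    have hB := mul_le_mul_of_nonneg_left h9 (le_of_lt hν0)
    have h10 : ν₁ * (cρ * ‖v₀‖ ^ 2) ≤ ν * (cρ * ‖v₀‖ ^ 2) :=
      mul_le_mul_of_nonneg_right hνν₁ (mul_nonneg hcρ.le (sq_nonneg _))
    linarith [hA, hB, h10]
  -- term (q)
  have htq : cfin * ‖q‖ ^ 2 ≤ (inner ℂ q ((ν : ℂ) • κ₁ q + κ₀' q) : ℂ).re := by
    have h9 := h₄ ν hνν₁ q
    have hA := mul_le_mul_of_nonneg_right hcf4 (sq_nonneg ‖q‖)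
    linarith
  -- boundary term
  have htb : cfin * ‖vb‖ ^ 2 ≤ (inner ℂ vb (Kz vb) : ℂ).re := by
    obtain ⟨u, hudef⟩ : ∃ x : WithLp 2 (B₁ × WithLp 2 (B₂ × B₃)), x = Kz vb := ⟨_, rfl⟩
    have hvb : Tz u = vb := by rw [hudef]; exact hTK vb
    have hTu := hTzdef u.fst u.snd.fst u.snd.snd
    have hueq : (WithLp.equiv 2 (B₁ × WithLp 2 (B₂ × B₃))).symm
        (u.fst, (WithLp.equiv 2 (B₂ × B₃)).symm (u.snd.fst, u.snd.snd)) = u := rfl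
    rw [hueq] at hTu
    have hiu : (inner ℂ vb u : ℂ).re = (inner ℂ u (Tz u) : ℂ).re := by
      rw [← hvb]; exact aux_re_symm _ _
    have hu2 : ‖u‖ ^ 2 = ‖u.fst‖ ^ 2 + ‖u.snd.fst‖ ^ 2 + ‖u.snd.snd‖ ^ 2 := by
      rw [WithLp.prod_norm_sq_eq_of_L2, WithLp.prod_norm_sq_eq_of_L2]; ring
    -- |z⁻¹| bound
    have hzabs : ν ≤ ‖z‖ := by
      have h11 := Complex.abs_re_le_norm z
      exact le_trans hz (le_trans (le_abs_self _) h11)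
    have hzinv : ‖(z⁻¹ : ℂ)‖ ≤ ν⁻¹ := by
      rw [norm_inv]
      exact inv_anti₀ hν0 hzabs
    have hαν : ‖α‖ ≤ ν := le_trans (le_of_lt hν₁) hνν₁
    -- the α-term
    have hαbd : -((‖α‖ / ν) * ‖u.snd.snd‖ ^ 2) ≤ (inner ℂ u.snd.snd ((z⁻¹ : ℂ) • α u.snd.snd) : ℂ).re := by
      have h1 : ‖(inner ℂ u.snd.snd ((z⁻¹ : ℂ) • α u.snd.snd) : ℂ)‖ ≤ ‖u.snd.snd‖ * ((‖α‖ / ν) * ‖u.snd.snd‖) := by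
        calc ‖(inner ℂ u.snd.snd ((z⁻¹ : ℂ) • α u.snd.snd) : ℂ)‖
            ≤ ‖u.snd.snd‖ * ‖(z⁻¹ : ℂ) • α u.snd.snd‖ := norm_inner_le_norm _ _
          _ ≤ ‖u.snd.snd‖ * ((‖α‖ / ν) * ‖u.snd.snd‖) := by
              apply mul_le_mul_of_nonneg_left _ (norm_nonneg _)
              rw [norm_smul]
              calc ‖(z⁻¹ : ℂ)‖ * ‖α u.snd.snd‖ ≤ ν⁻¹ * (‖α‖ * ‖u.snd.snd‖) :=
                    mul_le_mul hzinv (le_opNorm α _) (norm_nonneg _) (inv_nonneg.mpr hν0.le)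
                _ = (‖α‖ / ν) * ‖u.snd.snd‖ := by rw [div_eq_mul_inv]; ring
      have h3 := Complex.abs_re_le_norm (inner ℂ u.snd.snd ((z⁻¹ : ℂ) • α u.snd.snd) : ℂ)
      have h4 := neg_abs_le ((inner ℂ u.snd.snd ((z⁻¹ : ℂ) • α u.snd.snd) : ℂ).re)
      have h5 := abs_le.mp (le_refl |((inner ℂ u.snd.snd ((z⁻¹ : ℂ) • α u.snd.snd) : ℂ).re)|)
      linarith [h1, h3, h4, norm_nonneg (inner ℂ u.snd.snd ((z⁻¹ : ℂ) • α u.snd.snd) : ℂ)]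
    -- main expansion of Re ⟪u, Tz u⟫
    have hmain : (inner ℂ u (Tz u) : ℂ).re
        = ‖u.fst‖ ^ 2 + ‖u.snd.fst‖ ^ 2 + ‖u.snd.snd‖ ^ 2
          + (inner ℂ u.snd.snd ((z⁻¹ : ℂ) • α u.snd.snd) : ℂ).re := by
      rw [hTu]
      simp only [WithLp.prod_inner_apply, WithLp.equiv_symm_apply, WithLp.ofLp_toLp, WithLp.toLp_fst, WithLp.toLp_snd, WithLp.ofLp_fst, WithLp.ofLp_snd]
      simp only [inner_add_right, inner_sub_right, Complex.add_re, Complex.sub_re]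
      have p1 : (inner ℂ u.fst (adjoint β u.snd.fst) : ℂ).re = (inner ℂ u.snd.fst (β u.fst) : ℂ).re := by
        rw [adjoint_inner_right]; exact aux_re_symm _ _
      have p2 : (inner ℂ u.fst (adjoint β (adjoint Q u.snd.snd)) : ℂ).re
          = (inner ℂ u.snd.snd (Q (β u.fst)) : ℂ).re := by
        rw [adjoint_inner_right, adjoint_inner_right]; exact aux_re_symm _ _
      have p3 : (inner ℂ u.snd.snd (Q (C_b u.snd.fst)) : ℂ).re
          = -(inner ℂ u.snd.fst (C_b (adjoint Q u.snd.snd)) : ℂ).re := by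
        rw [← adjoint_inner_left Q, ← adjoint_inner_left C_b, hCb]
        simp only [ContinuousLinearMap.neg_apply, inner_neg_left, Complex.neg_re]
        exact congrArg Neg.neg (aux_re_symm _ _)
      have p4 : (inner ℂ u.fst u.fst : ℂ).re = ‖u.fst‖ ^ 2 := aux_self_re _
      have p5 : (inner ℂ u.snd.fst u.snd.fst : ℂ).re = ‖u.snd.fst‖ ^ 2 := aux_self_re _
      have p6 : (inner ℂ u.snd.snd u.snd.snd : ℂ).re = ‖u.snd.snd‖ ^ 2 := aux_self_re _
      linarith [p1, p2, p3, p4, p5, p6]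
    -- lower bound for Re ⟪u, Tz u⟫
    have hub : δ₁ * ‖u‖ ^ 2 ≤ (inner ℂ u (Tz u) : ℂ).re := by
      rw [hmain, hu2]
      have hαν' : ‖α‖ / ν ≤ ‖α‖ / ν₁ := by
        apply div_le_div_of_nonneg_left (norm_nonneg α) hν₁pos hνν₁
      have hδle : δ₁ ≤ 1 - ‖α‖ / ν := by rw [hδ₁def]; linarith
      have hδ1 : δ₁ ≤ 1 := by
        rw [hδ₁def]
        have : 0 ≤ ‖α‖ / ν₁ := by positivity
        linarith
      have f1 : δ₁ * ‖u.fst‖ ^ 2 ≤ 1 * ‖u.fst‖ ^ 2 := mul_le_mul_of_nonneg_right hδ1 (sq_nonneg _)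
      have f2 : δ₁ * ‖u.snd.fst‖ ^ 2 ≤ 1 * ‖u.snd.fst‖ ^ 2 := mul_le_mul_of_nonneg_right hδ1 (sq_nonneg _)
      have f3 : δ₁ * ‖u.snd.snd‖ ^ 2 ≤ (1 - ‖α‖ / ν) * ‖u.snd.snd‖ ^ 2 :=
        mul_le_mul_of_nonneg_right hδle (sq_nonneg _)
      linarith [f1, f2, f3, hαbd]
    -- upper bound ‖vb‖² ≤ D‖u‖²
    have hZsm : ‖(z⁻¹ : ℂ) • α u.snd.snd‖ ≤ ‖u.snd.snd‖ := by
      rw [norm_smul]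
      calc ‖(z⁻¹ : ℂ)‖ * ‖α u.snd.snd‖ ≤ ν⁻¹ * (ν * ‖u.snd.snd‖) := by
            apply mul_le_mul hzinv _ (norm_nonneg _) (inv_nonneg.mpr hν0.le)
            exact le_trans (le_opNorm α _) (mul_le_mul_of_nonneg_right hαν (norm_nonneg _))
        _ = ‖u.snd.snd‖ := by rw [← mul_assoc, inv_mul_cancel₀ (ne_of_gt hν0), one_mul]
    have hX : ‖u.fst - adjoint β u.snd.fst - adjoint β (adjoint Q u.snd.snd)‖
        ≤ ‖u.fst‖ + ‖adjoint β‖ * ‖u.snd.fst‖ + ‖adjoint β‖ * ‖adjoint Q‖ * ‖u.snd.snd‖ := by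
      have n1 := norm_sub_le (u.fst - adjoint β u.snd.fst) (adjoint β (adjoint Q u.snd.snd))
      have n2 := norm_sub_le u.fst (adjoint β u.snd.fst)
      have n3 := le_opNorm (adjoint β) u.snd.fst
      have n4 := le_opNorm (adjoint β) (adjoint Q u.snd.snd)
      have n5 := le_opNorm (adjoint Q) u.snd.snd
      have n6 : ‖adjoint β‖ * ‖adjoint Q u.snd.snd‖ ≤ ‖adjoint β‖ * (‖adjoint Q‖ * ‖u.snd.snd‖) :=
        mul_le_mul_of_nonneg_left n5 (norm_nonneg _)
      linarith [n1, n2, n3, n4, n6]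
    have hY : ‖β u.fst + u.snd.fst - C_b (adjoint Q u.snd.snd)‖
        ≤ ‖β‖ * ‖u.fst‖ + ‖u.snd.fst‖ + ‖C_b‖ * ‖adjoint Q‖ * ‖u.snd.snd‖ := by
      have n1 := norm_sub_le (β u.fst + u.snd.fst) (C_b (adjoint Q u.snd.snd))
      have n2 := norm_add_le (β u.fst) u.snd.fst
      have n3 := le_opNorm β u.fst
      have n4 := le_opNorm C_b (adjoint Q u.snd.snd)
      have n5 := le_opNorm (adjoint Q) u.snd.snd
      have n6 : ‖C_b‖ * ‖adjoint Q u.snd.snd‖ ≤ ‖C_b‖ * (‖adjoint Q‖ * ‖u.snd.snd‖) :=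
        mul_le_mul_of_nonneg_left n5 (norm_nonneg _)
      linarith [n1, n2, n3, n4, n6]
    have hZ : ‖Q (β u.fst) - Q (C_b u.snd.fst) + u.snd.snd + (z⁻¹ : ℂ) • α u.snd.snd‖
        ≤ ‖Q‖ * ‖β‖ * ‖u.fst‖ + ‖Q‖ * ‖C_b‖ * ‖u.snd.fst‖ + 2 * ‖u.snd.snd‖ := by
      have n1 := norm_add_le (Q (β u.fst) - Q (C_b u.snd.fst) + u.snd.snd) ((z⁻¹ : ℂ) • α u.snd.snd)
      have n2 := norm_add_le (Q (β u.fst) - Q (C_b u.snd.fst)) u.snd.snd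
      have n3 := norm_sub_le (Q (β u.fst)) (Q (C_b u.snd.fst))
      have n4 := le_opNorm Q (β u.fst)
      have n5 := le_opNorm β u.fst
      have n6 : ‖Q‖ * ‖β u.fst‖ ≤ ‖Q‖ * (‖β‖ * ‖u.fst‖) :=
        mul_le_mul_of_nonneg_left n5 (norm_nonneg _)
      have n7 := le_opNorm Q (C_b u.snd.fst)
      have n8 := le_opNorm C_b u.snd.fst
      have n9 : ‖Q‖ * ‖C_b u.snd.fst‖ ≤ ‖Q‖ * (‖C_b‖ * ‖u.snd.fst‖) :=
        mul_le_mul_of_nonneg_left n8 (norm_nonneg _)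
      linarith [n1, n2, n3, n4, n6, n7, n9, hZsm]
    have hvbn : ‖vb‖ ^ 2 = ‖u.fst - adjoint β u.snd.fst - adjoint β (adjoint Q u.snd.snd)‖ ^ 2
        + ‖β u.fst + u.snd.fst - C_b (adjoint Q u.snd.snd)‖ ^ 2
        + ‖Q (β u.fst) - Q (C_b u.snd.fst) + u.snd.snd + (z⁻¹ : ℂ) • α u.snd.snd‖ ^ 2 := by
      rw [← hvb, hTu]
      simp only [WithLp.prod_norm_sq_eq_of_L2, WithLp.equiv_symm_apply, WithLp.ofLp_toLp, WithLp.toLp_fst, WithLp.toLp_snd, WithLp.ofLp_fst, WithLp.ofLp_snd]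
      ring
    have hXsq := aux_sq3 hX (norm_nonneg _) (norm_nonneg _) (by positivity) (by positivity)
    have hYsq := aux_sq3 hY (norm_nonneg _) (by positivity) (norm_nonneg _) (by positivity)
    have hZsq := aux_sq3 hZ (norm_nonneg _) (by positivity) (by positivity) (by positivity)
    have habs : ‖vb‖ ^ 2 ≤ D * ‖u‖ ^ 2 := by
      rw [hvbn, hu2]
      have g1 : (3 + 3*‖β‖^2 + 3*(‖Q‖*‖β‖)^2) * ‖u.fst‖^2 ≤ D * ‖u.fst‖^2 := by
        apply mul_le_mul_of_nonneg_right _ (sq_nonneg _)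
        rw [hDdef]; linarith [sq_nonneg ‖adjoint β‖, sq_nonneg (‖Q‖*‖C_b‖),
          sq_nonneg (‖adjoint β‖*‖adjoint Q‖), sq_nonneg (‖C_b‖*‖adjoint Q‖)]
      have g2 : (3*‖adjoint β‖^2 + 3 + 3*(‖Q‖*‖C_b‖)^2) * ‖u.snd.fst‖^2 ≤ D * ‖u.snd.fst‖^2 := by
        apply mul_le_mul_of_nonneg_right _ (sq_nonneg _)
        rw [hDdef]; linarith [sq_nonneg ‖β‖, sq_nonneg (‖Q‖*‖β‖),
          sq_nonneg (‖adjoint β‖*‖adjoint Q‖), sq_nonneg (‖C_b‖*‖adjoint Q‖)]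
      have g3 : (3*(‖adjoint β‖*‖adjoint Q‖)^2 + 3*(‖C_b‖*‖adjoint Q‖)^2 + 12) * ‖u.snd.snd‖^2
          ≤ D * ‖u.snd.snd‖^2 := by
        apply mul_le_mul_of_nonneg_right _ (sq_nonneg _)
        rw [hDdef]; linarith [sq_nonneg ‖β‖, sq_nonneg (‖Q‖*‖β‖),
          sq_nonneg ‖adjoint β‖, sq_nonneg (‖Q‖*‖C_b‖)]
      linarith [hXsq, hYsq, hZsq, g1, g2, g3]
    -- conclude boundary bound
    have hfinb : cfin * ‖vb‖ ^ 2 ≤ δ₁ * ‖u‖ ^ 2 := by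
      have s1 : cfin * ‖vb‖ ^ 2 ≤ cB * ‖vb‖ ^ 2 :=
        mul_le_mul_of_nonneg_right hcf3 (sq_nonneg _)
      have s2 : cB * ‖vb‖ ^ 2 ≤ δ₁ * ‖u‖ ^ 2 := by
        rw [hcBdef, div_mul_eq_mul_div, div_le_iff₀ hD0]
        have s3 := mul_le_mul_of_nonneg_left habs (le_of_lt hδ₁0)
        linarith [s3]
      linarith
    rw [← hudef]
    calc cfin * ‖vb‖ ^ 2 ≤ δ₁ * ‖u‖ ^ 2 := hfinb
      _ ≤ (inner ℂ u (Tz u) : ℂ).re := hub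
      _ = (inner ℂ vb u : ℂ).re := hiu.symm
  -- middle block
  obtain ⟨sx, hsx⟩ : ∃ x : Hθ, x = adjoint p x₁ + adjoint b (C' (e x₁)) := ⟨_, rfl⟩
  obtain ⟨aa, haa⟩ : ∃ x : Hθ, x = m₅₅' sx := ⟨_, rfl⟩
  obtain ⟨gg, hgg⟩ : ∃ x : G, x = xG + e x₃ + b xθ := ⟨_, rfl⟩
  obtain ⟨ww, hww⟩ : ∃ x : H, x = W (adjoint e (C' (b xθ))) := ⟨_, rfl⟩
  obtain ⟨hh2, hhh2⟩ : ∃ x : H, x = x₃ - ww := ⟨_, rfl⟩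
  obtain ⟨tt2, htt2⟩ : ∃ x : Hθ, x = xθ + aa := ⟨_, rfl⟩
  have hSxθ : (p + (adjoint e).comp (C'.comp b)) xθ = p xθ + adjoint e (C' (b xθ)) := rfl
  have hSx₁ : adjoint (p + (adjoint e).comp (C'.comp b)) x₁ = sx := by
    rw [hSadj, hsx]; rfl
  have hMww : M₁ ww = adjoint e (C' (b xθ)) := by rw [hww]; exact hW₁' _
  -- flips
  have F1 : (inner ℂ x₁ (p xθ) : ℂ).re = (inner ℂ xθ (adjoint p x₁) : ℂ).re := by
    rw [adjoint_inner_right]; exact aux_re_symm _ _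
  have F2 : (inner ℂ x₁ (adjoint e (C' (b xθ))) : ℂ).re
      = (inner ℂ xθ (adjoint b (C' (e x₁))) : ℂ).re := by
    rw [adjoint_inner_right, adjoint_inner_right, hC'sym]; exact aux_re_symm _ _
  have Fa : (inner ℂ (e x₃) (C' xG) : ℂ).re = (inner ℂ x₃ (adjoint e (C' xG)) : ℂ).re := by
    rw [adjoint_inner_right]
  have Fb : (inner ℂ (e x₃) (C' (e x₃)) : ℂ).re
      = (inner ℂ x₃ (adjoint e (C' (e x₃))) : ℂ).re := by
    rw [adjoint_inner_right]
  have Fc : (inner ℂ (e x₃) (C' (b xθ)) : ℂ).re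
      = (inner ℂ x₃ (adjoint e (C' (b xθ))) : ℂ).re := by
    rw [adjoint_inner_right]
  have Fd : (inner ℂ (b xθ) (C' xG) : ℂ).re = (inner ℂ xθ (adjoint b (C' xG)) : ℂ).re := by
    rw [adjoint_inner_right]
  have Fe : (inner ℂ (b xθ) (C' (e x₃)) : ℂ).re
      = (inner ℂ x₃ (adjoint e (C' (b xθ))) : ℂ).re := by
    rw [adjoint_inner_right, hC'sym]; exact aux_re_symm _ _
  have Ff : (inner ℂ (b xθ) (C' (b xθ)) : ℂ).re
      = (inner ℂ xθ (adjoint b (C' (b xθ))) : ℂ).re := by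
    rw [adjoint_inner_right]
  have G3 : (inner ℂ xθ sx : ℂ).re
      = (inner ℂ xθ (adjoint p x₁) : ℂ).re + (inner ℂ xθ (adjoint b (C' (e x₁))) : ℂ).re := by
    rw [hsx, inner_add_right, Complex.add_re]
  -- the four completed squares
  have E1 : (inner ℂ gg (C' gg) : ℂ).re
      = (inner ℂ xG (C' xG) : ℂ).re + (inner ℂ xG (C' (e x₃)) : ℂ).re
        + (inner ℂ xG (C' (b xθ)) : ℂ).re + (inner ℂ x₃ (adjoint e (C' xG)) : ℂ).re
        + (inner ℂ x₃ (adjoint e (C' (e x₃))) : ℂ).re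
        + 2 * (inner ℂ x₃ (adjoint e (C' (b xθ))) : ℂ).re
        + (inner ℂ xθ (adjoint b (C' xG)) : ℂ).re
        + (inner ℂ xθ (adjoint b (C' (b xθ))) : ℂ).re := by
    rw [hgg]
    simp only [map_add, inner_add_left, inner_add_right, Complex.add_re]
    rw [Fa, Fb, Fc, Fd, Fe, Ff]; ring
  have E2 : (inner ℂ hh2 (μ hh2 - adjoint e (C' (e hh2))) : ℂ).re
      = (inner ℂ x₃ (μ x₃) : ℂ).re - (inner ℂ x₃ (adjoint e (C' (e x₃))) : ℂ).re
        - 2 * (inner ℂ x₃ (adjoint e (C' (b xθ))) : ℂ).re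
        + (inner ℂ xθ (adjoint b (C' (e ww))) : ℂ).re := by
    have h6 : μ ww - adjoint e (C' (e ww)) = adjoint e (C' (b xθ)) := by
      rw [hww]; exact hW₁ _
    have hv2 : μ hh2 - adjoint e (C' (e hh2))
        = (μ x₃ - adjoint e (C' (e x₃))) - adjoint e (C' (b xθ)) := by
      rw [hhh2]; simp only [map_sub]; rw [← h6]; abel
    rw [hv2, hhh2]
    simp only [inner_sub_left, inner_sub_right, Complex.sub_re]
    have G1a : (inner ℂ ww (μ x₃) : ℂ).re - (inner ℂ ww (adjoint e (C' (e x₃))) : ℂ).re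
        = (inner ℂ x₃ (adjoint e (C' (b xθ))) : ℂ).re := by
      rw [← Complex.sub_re, ← inner_sub_right, ← hM₁app, ← hM₁a, adjoint_inner_right, hMww]
      exact aux_re_symm _ _
    have G2a : (inner ℂ ww (adjoint e (C' (b xθ))) : ℂ).re
        = (inner ℂ xθ (adjoint b (C' (e ww))) : ℂ).re := by
      have h7 : (inner ℂ (adjoint e (C' (b xθ))) ww : ℂ) = inner ℂ xθ (adjoint b (C' (e ww))) := by
        rw [adjoint_inner_left, ← hC'sym, ← adjoint_inner_right]
      calc (inner ℂ ww (adjoint e (C' (b xθ))) : ℂ).re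
          = (inner ℂ (adjoint e (C' (b xθ))) ww : ℂ).re := aux_re_symm _ _
        _ = _ := congrArg Complex.re h7
    linarith [G1a, G2a]
  have E3 : (inner ℂ tt2 (γ₀ tt2 - adjoint b (C' (e (W (adjoint e (C' (b tt2))))))) : ℂ).re
      = (inner ℂ xθ (γ₀ xθ) : ℂ).re - (inner ℂ xθ (adjoint b (C' (e ww))) : ℂ).re
        + 2 * ((inner ℂ xθ (adjoint p x₁) : ℂ).re + (inner ℂ xθ (adjoint b (C' (e x₁))) : ℂ).re)
        + (inner ℂ sx aa : ℂ).re := by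
    have hm₅xθ : m₅ xθ = γ₀ xθ - adjoint b (C' (e ww)) := by rw [hm₅app, ← hww]
    have hv3 : γ₀ tt2 - adjoint b (C' (e (W (adjoint e (C' (b tt2))))))
        = (γ₀ xθ - adjoint b (C' (e ww))) + sx := by
      rw [← hm₅app, htt2, map_add, hm₅xθ, haa, hm₅1]
    rw [hv3, htt2]
    simp only [inner_add_left, inner_add_right, inner_sub_right, Complex.add_re,
      Complex.sub_re]
    have G4 : (inner ℂ aa (γ₀ xθ) : ℂ).re - (inner ℂ aa (adjoint b (C' (e ww))) : ℂ).re
        = (inner ℂ xθ (adjoint p x₁) : ℂ).re + (inner ℂ xθ (adjoint b (C' (e x₁))) : ℂ).re := by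
      rw [← Complex.sub_re, ← inner_sub_right, ← hm₅xθ, ← hm₅a, adjoint_inner_right, haa,
        hm₅1, ← G3]
      exact aux_re_symm _ _
    have G5 : (inner ℂ aa sx : ℂ).re = (inner ℂ sx aa : ℂ).re := aux_re_symm _ _
    linarith [G3, G4, G5]
  have E4 : (inner ℂ x₁ (ε x₁ + adjoint e (C' (e x₁)) - (p aa + adjoint e (C' (b aa)))) : ℂ).re
      = (inner ℂ x₁ (ε x₁) : ℂ).re + (inner ℂ x₁ (adjoint e (C' (e x₁))) : ℂ).re
        - (inner ℂ sx aa : ℂ).re := by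
    simp only [inner_add_right, inner_sub_right, Complex.add_re, Complex.sub_re]
    have G6a : (inner ℂ x₁ (p aa) : ℂ).re = (inner ℂ (adjoint p x₁) aa : ℂ).re := by
      rw [← adjoint_inner_left]
    have G6b : (inner ℂ x₁ (adjoint e (C' (b aa))) : ℂ).re
        = (inner ℂ (adjoint b (C' (e x₁))) aa : ℂ).re := by
      rw [adjoint_inner_right, hC'sym, ← adjoint_inner_left]
    have G6 : (inner ℂ x₁ (p aa) : ℂ).re + (inner ℂ x₁ (adjoint e (C' (b aa))) : ℂ).re
        = (inner ℂ sx aa : ℂ).re := by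
      rw [G6a, G6b, ← Complex.add_re, ← inner_add_left, ← hsx]
    linarith [G6]
  -- expansions of the four rows
  have LA1 : (inner ℂ x₁ (ε x₁ + adjoint e (C' (e x₁)) + (p xθ + adjoint e (C' (b xθ)))) : ℂ).re
      = (inner ℂ x₁ (ε x₁) : ℂ).re + (inner ℂ x₁ (adjoint e (C' (e x₁))) : ℂ).re
        + ((inner ℂ x₁ (p xθ) : ℂ).re + (inner ℂ x₁ (adjoint e (C' (b xθ))) : ℂ).re) := by
    simp only [inner_add_right, Complex.add_re]
  have LA2 : (inner ℂ xG (C' xG + C' (e x₃) + C' (b xθ)) : ℂ).re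
      = (inner ℂ xG (C' xG) : ℂ).re + (inner ℂ xG (C' (e x₃)) : ℂ).re
        + (inner ℂ xG (C' (b xθ)) : ℂ).re := by
    simp only [inner_add_right, Complex.add_re]
  have LA3 : (inner ℂ x₃ (adjoint e (C' xG) + μ x₃) : ℂ).re
      = (inner ℂ x₃ (adjoint e (C' xG)) : ℂ).re + (inner ℂ x₃ (μ x₃) : ℂ).re := by
    simp only [inner_add_right, Complex.add_re]
  have LA4 : (inner ℂ xθ (sx + adjoint b (C' xG) + γ₀ xθ + adjoint b (C' (b xθ))) : ℂ).re
      = (inner ℂ xθ sx : ℂ).re + (inner ℂ xθ (adjoint b (C' xG)) : ℂ).re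
        + (inner ℂ xθ (γ₀ xθ) : ℂ).re + (inner ℂ xθ (adjoint b (C' (b xθ))) : ℂ).re := by
    simp only [inner_add_right, Complex.add_re]
  have key : (inner ℂ x₁ (ε x₁ + adjoint e (C' (e x₁)) + (p xθ + adjoint e (C' (b xθ)))) : ℂ).re
      + (inner ℂ xG (C' xG + C' (e x₃) + C' (b xθ)) : ℂ).re
      + (inner ℂ x₃ (adjoint e (C' xG) + μ x₃) : ℂ).re
      + (inner ℂ xθ (sx + adjoint b (C' xG) + γ₀ xθ + adjoint b (C' (b xθ))) : ℂ).re
      = (inner ℂ gg (C' gg) : ℂ).re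
        + (inner ℂ hh2 (μ hh2 - adjoint e (C' (e hh2))) : ℂ).re
        + (inner ℂ tt2 (γ₀ tt2 - adjoint b (C' (e (W (adjoint e (C' (b tt2))))))) : ℂ).re
        + (inner ℂ x₁ (ε x₁ + adjoint e (C' (e x₁)) - (p aa + adjoint e (C' (b aa)))) : ℂ).re := by
    rw [LA1, LA2, LA3, LA4, E1, E2, E3, E4]
    linarith [F1, F2, G3]
  -- coercivity of the four squares
  have b1 : cC * ‖C' gg‖ ^ 2 ≤ (inner ℂ gg (C' gg) : ℂ).re := by
    have h7 : C (C' gg) = gg := hC'₁ gg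
    calc cC * ‖C' gg‖ ^ 2 ≤ (inner ℂ (C' gg) (C (C' gg)) : ℂ).re := hCcoer _
      _ = (inner ℂ (C (C' gg)) (C' gg) : ℂ).re := aux_re_symm _ _
      _ = (inner ℂ gg (C' gg) : ℂ).re := by rw [h7]
  have b2 : c₁ * ‖hh2‖ ^ 2 ≤ (inner ℂ hh2 (μ hh2 - adjoint e (C' (e hh2))) : ℂ).re := h₁ hh2
  have b3 : c₂ * ‖tt2‖ ^ 2
      ≤ (inner ℂ tt2 (γ₀ tt2 - adjoint b (C' (e (W (adjoint e (C' (b tt2))))))) : ℂ).re :=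
    h₂ tt2
  have b4 : c₃ * ‖x₁‖ ^ 2
      ≤ ν * (inner ℂ x₁ (ε x₁ + adjoint e (C' (e x₁)) - (p aa + adjoint e (C' (b aa)))) : ℂ).re
        + (inner ℂ x₁ (σ x₁) : ℂ).re := by
    have h3x := h₃ ν hνν₁ x₁
    rw [hSadj] at h3x
    simp only [ContinuousLinearMap.add_apply, ContinuousLinearMap.comp_apply] at h3x
    rw [← hsx, ← haa] at h3x
    rw [inner_add_right, Complex.add_re, aux_smul_re] at h3x
    exact h3x
  -- norm recovery
  have haan : ‖aa‖ ≤ Kθ * ‖x₁‖ := by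
    have n1 : ‖aa‖ ≤ ‖m₅₅'‖ * ‖sx‖ := by rw [haa]; exact le_opNorm _ _
    have n2 : ‖sx‖ ≤ ‖adjoint p‖ * ‖x₁‖ + ‖adjoint b‖ * (‖C'‖ * (‖e‖ * ‖x₁‖)) := by
      rw [hsx]
      refine le_trans (norm_add_le _ _) (add_le_add (le_opNorm _ _) ?_)
      calc ‖adjoint b (C' (e x₁))‖ ≤ ‖adjoint b‖ * ‖C' (e x₁)‖ := le_opNorm _ _
        _ ≤ ‖adjoint b‖ * (‖C'‖ * ‖e x₁‖) :=
            mul_le_mul_of_nonneg_left (le_opNorm _ _) (norm_nonneg _)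
        _ ≤ ‖adjoint b‖ * (‖C'‖ * (‖e‖ * ‖x₁‖)) := by
            have := mul_le_mul_of_nonneg_left (le_opNorm e x₁) (norm_nonneg C')
            exact mul_le_mul_of_nonneg_left this (norm_nonneg _)
    calc ‖aa‖ ≤ ‖m₅₅'‖ * ‖sx‖ := n1
      _ ≤ ‖m₅₅'‖ * (‖adjoint p‖ * ‖x₁‖ + ‖adjoint b‖ * (‖C'‖ * (‖e‖ * ‖x₁‖))) :=
          mul_le_mul_of_nonneg_left n2 (norm_nonneg _)
      _ = Kθ * ‖x₁‖ := by rw [hKθdef]; ring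
  have hwwn : ‖ww‖ ≤ KW * ‖xθ‖ := by
    have n1 : ‖ww‖ ≤ ‖W‖ * ‖adjoint e (C' (b xθ))‖ := by rw [hww]; exact le_opNorm _ _
    have n2 : ‖adjoint e (C' (b xθ))‖ ≤ ‖adjoint e‖ * (‖C'‖ * (‖b‖ * ‖xθ‖)) := by
      calc ‖adjoint e (C' (b xθ))‖ ≤ ‖adjoint e‖ * ‖C' (b xθ)‖ := le_opNorm _ _
        _ ≤ ‖adjoint e‖ * (‖C'‖ * ‖b xθ‖) :=
            mul_le_mul_of_nonneg_left (le_opNorm _ _) (norm_nonneg _)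
        _ ≤ ‖adjoint e‖ * (‖C'‖ * (‖b‖ * ‖xθ‖)) := by
            have := mul_le_mul_of_nonneg_left (le_opNorm b xθ) (norm_nonneg C')
            exact mul_le_mul_of_nonneg_left this (norm_nonneg _)
    calc ‖ww‖ ≤ ‖W‖ * ‖adjoint e (C' (b xθ))‖ := n1
      _ ≤ ‖W‖ * (‖adjoint e‖ * (‖C'‖ * (‖b‖ * ‖xθ‖))) :=
          mul_le_mul_of_nonneg_left n2 (norm_nonneg _)
      _ = KW * ‖xθ‖ := by rw [hKWdef]; ring
  have hxθn : ‖xθ‖ ≤ ‖tt2‖ + Kθ * ‖x₁‖ := by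
    have h7 : xθ = tt2 - aa := by rw [htt2]; abel
    calc ‖xθ‖ = ‖tt2 - aa‖ := by rw [← h7]
      _ ≤ ‖tt2‖ + ‖aa‖ := norm_sub_le _ _
      _ ≤ ‖tt2‖ + Kθ * ‖x₁‖ := by linarith [haan]
  have hx₃n : ‖x₃‖ ≤ ‖hh2‖ + KW * ‖xθ‖ := by
    have h7 : x₃ = hh2 + ww := by rw [hhh2]; abel
    calc ‖x₃‖ = ‖hh2 + ww‖ := by rw [← h7]
      _ ≤ ‖hh2‖ + ‖ww‖ := norm_add_le _ _
      _ ≤ ‖hh2‖ + KW * ‖xθ‖ := by linarith [hwwn]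
  have hxGn : ‖xG‖ ≤ ‖C‖ * ‖C' gg‖ + ‖e‖ * ‖x₃‖ + ‖b‖ * ‖xθ‖ := by
    have h7 : xG = gg - e x₃ - b xθ := by rw [hgg]; abel
    have h8 : ‖gg‖ ≤ ‖C‖ * ‖C' gg‖ := by
      calc ‖gg‖ = ‖C (C' gg)‖ := by rw [hC'₁ gg]
        _ ≤ ‖C‖ * ‖C' gg‖ := le_opNorm _ _
    calc ‖xG‖ = ‖gg - e x₃ - b xθ‖ := by rw [← h7]
      _ ≤ ‖gg - e x₃‖ + ‖b xθ‖ := norm_sub_le _ _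
      _ ≤ ‖gg‖ + ‖e x₃‖ + ‖b xθ‖ := by linarith [norm_sub_le gg (e x₃)]
      _ ≤ ‖C‖ * ‖C' gg‖ + ‖e‖ * ‖x₃‖ + ‖b‖ * ‖xθ‖ := by
          linarith [h8, le_opNorm e x₃, le_opNorm b xθ]
  have q1 : ‖xθ‖ ^ 2 ≤ 2 * ‖tt2‖ ^ 2 + 2 * (Kθ * ‖x₁‖) ^ 2 :=
    aux_sq2 hxθn (norm_nonneg _) (norm_nonneg _) (mul_nonneg hKθ0 (norm_nonneg _))
  have q2' : ‖x₃‖ ^ 2 ≤ 2 * ‖hh2‖ ^ 2 + 2 * (KW * ‖xθ‖) ^ 2 :=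
    aux_sq2 hx₃n (norm_nonneg _) (norm_nonneg _) (mul_nonneg hKW0 (norm_nonneg _))
  have q3 : ‖xG‖ ^ 2 ≤ 3 * (‖C‖ * ‖C' gg‖) ^ 2 + 3 * (‖e‖ * ‖x₃‖) ^ 2 + 3 * (‖b‖ * ‖xθ‖) ^ 2 :=
    aux_sq3 hxGn (norm_nonneg _) (by positivity) (by positivity) (by positivity)
  have q2 : ‖x₃‖ ^ 2 ≤ 2 * ‖hh2‖ ^ 2 + 4 * KW ^ 2 * ‖tt2‖ ^ 2
      + 4 * KW ^ 2 * Kθ ^ 2 * ‖x₁‖ ^ 2 := by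
    have m1 := mul_le_mul_of_nonneg_left q1 (by positivity : (0:ℝ) ≤ 2 * KW ^ 2)
    linarith [q2', m1]
  have q3' : ‖xG‖ ^ 2 ≤ 3 * ‖C‖ ^ 2 * ‖C' gg‖ ^ 2
      + (6 * ‖e‖ ^ 2 * ‖hh2‖ ^ 2 + 12 * ‖e‖ ^ 2 * KW ^ 2 * ‖tt2‖ ^ 2
        + 12 * ‖e‖ ^ 2 * KW ^ 2 * Kθ ^ 2 * ‖x₁‖ ^ 2)
      + (6 * ‖b‖ ^ 2 * ‖tt2‖ ^ 2 + 6 * ‖b‖ ^ 2 * Kθ ^ 2 * ‖x₁‖ ^ 2) := by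
    have m2 := mul_le_mul_of_nonneg_left q2 (by positivity : (0:ℝ) ≤ 3 * ‖e‖ ^ 2)
    have m3 := mul_le_mul_of_nonneg_left q1 (by positivity : (0:ℝ) ≤ 3 * ‖b‖ ^ 2)
    linarith [q3, m2, m3]
  have hKsum : ‖x₁‖ ^ 2 + ‖xG‖ ^ 2 + ‖x₃‖ ^ 2 + ‖xθ‖ ^ 2
      ≤ K * (‖x₁‖ ^ 2 + ‖C' gg‖ ^ 2 + ‖hh2‖ ^ 2 + ‖tt2‖ ^ 2) := by
    have c1b : (1 + 2*Kθ^2 + 4*KW^2*Kθ^2 + 12*‖e‖^2*KW^2*Kθ^2 + 6*‖b‖^2*Kθ^2) * ‖x₁‖ ^ 2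
        ≤ K * ‖x₁‖ ^ 2 := by
      apply mul_le_mul_of_nonneg_right _ (sq_nonneg _)
      rw [hKdef]; linarith [sq_nonneg ‖C‖, sq_nonneg ‖e‖, sq_nonneg ‖b‖, sq_nonneg KW,
        mul_nonneg (sq_nonneg ‖e‖) (sq_nonneg KW)]
    have c2b : (3 * ‖C‖ ^ 2) * ‖C' gg‖ ^ 2 ≤ K * ‖C' gg‖ ^ 2 := by
      apply mul_le_mul_of_nonneg_right _ (sq_nonneg _)
      rw [hKdef]
      linarith [sq_nonneg Kθ, sq_nonneg KW, sq_nonneg ‖e‖, sq_nonneg ‖b‖,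
        mul_nonneg (sq_nonneg KW) (sq_nonneg Kθ),
        mul_nonneg (mul_nonneg (sq_nonneg ‖e‖) (sq_nonneg KW)) (sq_nonneg Kθ),
        mul_nonneg (sq_nonneg ‖b‖) (sq_nonneg Kθ),
        mul_nonneg (sq_nonneg ‖e‖) (sq_nonneg KW)]
    have c3b : (2 + 6 * ‖e‖ ^ 2) * ‖hh2‖ ^ 2 ≤ K * ‖hh2‖ ^ 2 := by
      apply mul_le_mul_of_nonneg_right _ (sq_nonneg _)
      rw [hKdef]
      linarith [sq_nonneg Kθ, sq_nonneg KW, sq_nonneg ‖C‖, sq_nonneg ‖e‖, sq_nonneg ‖b‖,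
        mul_nonneg (sq_nonneg KW) (sq_nonneg Kθ),
        mul_nonneg (mul_nonneg (sq_nonneg ‖e‖) (sq_nonneg KW)) (sq_nonneg Kθ),
        mul_nonneg (sq_nonneg ‖b‖) (sq_nonneg Kθ),
        mul_nonneg (sq_nonneg ‖e‖) (sq_nonneg KW)]
    have c4b : (2 + 4*KW^2 + 12*‖e‖^2*KW^2 + 6*‖b‖^2) * ‖tt2‖ ^ 2 ≤ K * ‖tt2‖ ^ 2 := by
      apply mul_le_mul_of_nonneg_right _ (sq_nonneg _)
      rw [hKdef]
      linarith [sq_nonneg Kθ, sq_nonneg ‖C‖, sq_nonneg ‖e‖,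
        mul_nonneg (sq_nonneg KW) (sq_nonneg Kθ),
        mul_nonneg (mul_nonneg (sq_nonneg ‖e‖) (sq_nonneg KW)) (sq_nonneg Kθ),
        mul_nonneg (sq_nonneg ‖b‖) (sq_nonneg Kθ)]
    linarith [q1, q2, q3', c1b, c2b, c3b, c4b]
  -- middle inequality
  have hmid : cmid * (‖x₁‖ ^ 2 + ‖xG‖ ^ 2 + ‖x₃‖ ^ 2 + ‖xθ‖ ^ 2)
      ≤ (inner ℂ x₁ ((ν : ℂ) • (ε x₁ + (adjoint e) (C' (e x₁))
            + ((p + (adjoint e).comp (C'.comp b)) xθ)) + σ x₁) : ℂ).re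
        + (inner ℂ xG ((ν : ℂ) • (C' xG + C' (e x₃) + C' (b xθ))) : ℂ).re
        + (inner ℂ x₃ ((ν : ℂ) • ((adjoint e) (C' xG) + μ x₃)) : ℂ).re
        + (inner ℂ xθ ((ν : ℂ) • ((adjoint (p + (adjoint e).comp (C'.comp b))) x₁
            + (adjoint b) (C' xG) + γ₀ xθ + (adjoint b) (C' (b xθ)))) : ℂ).re := by
    rw [hSxθ, hSx₁]
    rw [inner_add_right, Complex.add_re, aux_smul_re, aux_smul_re, aux_smul_re, aux_smul_re]
    have hcmC : cm ≤ cC := by rw [hcmdef]; exact min_le_left _ _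
    have hcm1 : cm ≤ c₁ := by
      rw [hcmdef]; exact le_trans (min_le_right _ _) (min_le_left _ _)
    have hcm2 : cm ≤ c₂ := by
      rw [hcmdef]; exact le_trans (min_le_right _ _) (min_le_right _ _)
    have hb1' : c₃ * ‖C' gg‖ ^ 2 ≤ ν * (inner ℂ gg (C' gg) : ℂ).re := by
      have s1 : c₃ ≤ ν * cC :=
        le_trans hνcm (mul_le_mul_of_nonneg_left hcmC (le_of_lt hν0))
      have s2 := mul_le_mul_of_nonneg_right s1 (sq_nonneg ‖C' gg‖)
      have s3 := mul_le_mul_of_nonneg_left b1 (le_of_lt hν0)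
      linarith [s2, s3]
    have hb2' : c₃ * ‖hh2‖ ^ 2
        ≤ ν * (inner ℂ hh2 (μ hh2 - adjoint e (C' (e hh2))) : ℂ).re := by
      have s1 : c₃ ≤ ν * c₁ :=
        le_trans hνcm (mul_le_mul_of_nonneg_left hcm1 (le_of_lt hν0))
      have s2 := mul_le_mul_of_nonneg_right s1 (sq_nonneg ‖hh2‖)
      have s3 := mul_le_mul_of_nonneg_left b2 (le_of_lt hν0)
      linarith [s2, s3]
    have hb3' : c₃ * ‖tt2‖ ^ 2
        ≤ ν * (inner ℂ tt2 (γ₀ tt2 - adjoint b (C' (e (W (adjoint e (C' (b tt2)))))))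
            : ℂ).re := by
      have s1 : c₃ ≤ ν * c₂ :=
        le_trans hνcm (mul_le_mul_of_nonneg_left hcm2 (le_of_lt hν0))
      have s2 := mul_le_mul_of_nonneg_right s1 (sq_nonneg ‖tt2‖)
      have s3 := mul_le_mul_of_nonneg_left b3 (le_of_lt hν0)
      linarith [s2, s3]
    have hKmul : cmid * (K * (‖x₁‖ ^ 2 + ‖C' gg‖ ^ 2 + ‖hh2‖ ^ 2 + ‖tt2‖ ^ 2))
        = c₃ * (‖x₁‖ ^ 2 + ‖C' gg‖ ^ 2 + ‖hh2‖ ^ 2 + ‖tt2‖ ^ 2) := by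
      rw [hcmiddef, ← mul_assoc, div_mul_cancel₀ c₃ (ne_of_gt hK0)]
    have hstep : cmid * (‖x₁‖ ^ 2 + ‖xG‖ ^ 2 + ‖x₃‖ ^ 2 + ‖xθ‖ ^ 2)
        ≤ c₃ * (‖x₁‖ ^ 2 + ‖C' gg‖ ^ 2 + ‖hh2‖ ^ 2 + ‖tt2‖ ^ 2) := by
      rw [← hKmul]
      exact mul_le_mul_of_nonneg_left hKsum (le_of_lt hcmid0)
    have hνkey := congrArg (fun t => ν * t) key
    linarith [hstep, hb1', hb2', hb3', b4, hνkey]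
  -- final assembly
  simp only [Complex.add_re]
  have hmcf : cfin * (‖x₁‖ ^ 2 + ‖xG‖ ^ 2 + ‖x₃‖ ^ 2 + ‖xθ‖ ^ 2)
      ≤ cmid * (‖x₁‖ ^ 2 + ‖xG‖ ^ 2 + ‖x₃‖ ^ 2 + ‖xθ‖ ^ 2) :=
    mul_le_mul_of_nonneg_right hcf2 (by positivity)
  linarith [ht0, htq, htb, hmid, hmcf]
end
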